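/- arXiv:2110.14259 — 5 statements merged into one kernel-verified Lean document; each statement's English description precedes it below -/
import Mathlib

section
/- Let X be a Banach lattice of measurable functions on ℝ^n containing the characteristic functions of balls. Let B and B' be balls with the same radius r such that c_{B'} = c_B + 4r·e_j where e_j is the j-th coordinate unit vector. If the j-th Riesz transform R_j is bounded on X, then ‖χ_B‖_X ∼ ‖χ_{B'}‖_X with constants independent of B. -/
open MeasureTheory Metric Set ENNReal

noncomputable section

abbrev Euc (n : ℕ) := EuclideanSpace ℝ (Fin n)

/-- A Banach lattice of measurable functions on `ℝⁿ`, modeled through its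
(extended-real valued) norm functional. -/
structure BFL (n : ℕ) where
  N : (Euc n → ℝ) → ℝ≥0∞
  mono : ∀ f g : Euc n → ℝ, (∀ x, |g x| ≤ |f x|) → N g ≤ N f
  add_le : ∀ f g : Euc n → ℝ, N (f + g) ≤ N f + N g
  smul : ∀ (a : ℝ) (f : Euc n → ℝ), N (fun x => a * f x) = ENNReal.ofReal |a| * N f

/-- The Köthe dual norm of a Banach function lattice, evaluated on a
nonnegative (extended-real valued) function. -/
def kdual {n : ℕ} (X : BFL n) (g : Euc n → ℝ≥0∞) : ℝ≥0∞ :=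
  ⨆ (f : Euc n → ℝ) (_ : Measurable f ∧ X.N f ≤ 1), ∫⁻ x, ENNReal.ofReal |f x| * g x

/-- The Hardy–Littlewood maximal operator (uncentered, over balls). -/
def hlMax (n : ℕ) (g : Euc n → ℝ≥0∞) (y : Euc n) : ℝ≥0∞ :=
  ⨆ (c : Euc n) (r : ℝ) (_ : 0 < r ∧ y ∈ ball c r),
    (volume (ball c r))⁻¹ * ∫⁻ x in ball c r, g x

/-- The characteristic function of a ball, as a real valued function. -/
def chiR (n : ℕ) (c : Euc n) (r : ℝ) : Euc n → ℝ := (ball c r).indicator fun _ => (1 : ℝ)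

/-- The characteristic function of a ball, as an `ℝ≥0∞` valued function. -/
def chiE (n : ℕ) (c : Euc n) (r : ℝ) : Euc n → ℝ≥0∞ := (ball c r).indicator fun _ => (1 : ℝ≥0∞)

/-- `T` is bounded on `X` and is given, off the support, by integration against the
kernel of the `j`-th Riesz transform on bounded compactly supported functions. -/
def IsRieszOn (n : ℕ) (j : Fin n) (X : BFL n) (T : (Euc n → ℝ) → Euc n → ℝ) : Prop :=
  (∃ C : ℝ≥0∞, C < ⊤ ∧ ∀ f : Euc n → ℝ, X.N (T f) ≤ C * X.N f) ∧
  ∀ f : Euc n → ℝ, Measurable f → (∃ M : ℝ, ∀ x, |f x| ≤ M) → HasCompactSupport f →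
    ∀ x ∉ tsupport f, T f x = ∫ y, ((x j - y j) / ‖x - y‖ ^ ((n : ℝ) + 1)) * f y

namespace Stmt3Aux

lemma coord_abs_le_norm {n : ℕ} (j : Fin n) (x : Euc n) : |x j| ≤ ‖x‖ := by
  have h := abs_real_inner_le_norm (EuclideanSpace.single j (1:ℝ)) x
  simpa [EuclideanSpace.inner_single_left] using h

/-- The uniform constant. -/
def κ (n : ℕ) : ℝ := 2 * (volume (ball (0 : Euc n) 1)).toReal / 6 ^ (n+1)

lemma vol_pos (n : ℕ) : (0:ℝ) < (volume (ball (0 : Euc n) 1)).toReal := by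
  have h1 : (0:ℝ≥0∞) < volume (ball (0 : Euc n) 1) := by
    apply measure_ball_pos; norm_num
  exact ENNReal.toReal_pos h1.ne' (measure_ball_lt_top).ne

lemma κ_pos (n : ℕ) : 0 < κ n := by
  have := vol_pos n
  have h6 : (0:ℝ) < 6 ^ (n+1) := by positivity
  exact div_pos (by linarith) h6

lemma vol_ball {n : ℕ} (j : Fin n) (c : Euc n) {r : ℝ} (hr : 0 ≤ r) :
    volume (ball c r) = ENNReal.ofReal (r ^ n) * volume (ball (0 : Euc n) 1) := by
  have hne : EuclideanSpace.single j (1:ℝ) ≠ 0 := by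
    intro h
    have h2 := congrArg norm h
    simp [EuclideanSpace.norm_single] at h2
  haveI := nontrivial_of_ne _ _ hne
  rw [Measure.addHaar_ball _ _ hr, finrank_euclideanSpace_fin]

lemma rpow_eq {n : ℕ} (a : ℝ) : a ^ ((n:ℝ)+1) = a ^ (n+1) := by
  rw [show ((n:ℝ)+1) = ((n+1 : ℕ) : ℝ) by push_cast; ring, Real.rpow_natCast]

lemma kernel_meas {n : ℕ} (j : Fin n) (x : Euc n) :
    Measurable fun y : Euc n => (x j - y j) / ‖x - y‖ ^ ((n:ℝ)+1) := by
  have h1 : Continuous fun y : Euc n => x j - y j := by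
    exact continuous_const.sub ((EuclideanSpace.proj j).continuous)
  have h2 : Continuous fun y : Euc n => ‖x - y‖ ^ ((n:ℝ)+1) := by
    apply Continuous.rpow_const (continuous_const.sub continuous_id).norm
    intro y; right; positivity
  exact h1.measurable.div h2.measurable

lemma int_lb {n : ℕ} (j : Fin n) (c : Euc n) {r : ℝ} (hr : 0 < r)
    {x : Euc n} {s : ℝ} (hs : |s| = 1)
    (h1 : ∀ y ∈ ball c r, 2*r ≤ s * (x j - y j))
    (h2 : ∀ y ∈ ball c r, ‖x - y‖ ≤ 6*r) :
    κ n ≤ |∫ y, ((x j - y j) / ‖x - y‖ ^ ((n:ℝ)+1)) * chiR n c r y| := by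
  set K : Euc n → ℝ := fun y => (x j - y j) / ‖x - y‖ ^ ((n:ℝ)+1) with hK
  have hKm : Measurable K := kernel_meas j x
  have key : ∀ y ∈ ball c r,
      2*r/(6*r)^(n+1) ≤ s * K y ∧ |K y| ≤ 6*r/(2*r)^(n+1) := by
    intro y hy
    have hxyj : 2*r ≤ |x j - y j| := by
      have := h1 y hy
      calc 2*r ≤ s * (x j - y j) := this
        _ ≤ |s * (x j - y j)| := le_abs_self _
        _ = |x j - y j| := by rw [abs_mul, hs, one_mul]
    have hsub : (x - y) j = x j - y j := rfl
    have hnorm_lb : 2*r ≤ ‖x - y‖ := by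
      have := coord_abs_le_norm j (x - y)
      rw [hsub] at this; linarith
    have hnpos : (0:ℝ) < ‖x - y‖ := lt_of_lt_of_le (by linarith) hnorm_lb
    have hDrw : ‖x - y‖ ^ ((n:ℝ)+1) = ‖x - y‖ ^ (n+1) := rpow_eq _
    have hDpos : (0:ℝ) < ‖x - y‖ ^ (n+1) := by positivity
    have hDub : ‖x - y‖ ^ (n+1) ≤ (6*r)^(n+1) :=
      pow_le_pow_left₀ (norm_nonneg _) (h2 y hy) _
    have hDlb : (2*r)^(n+1) ≤ ‖x - y‖ ^ (n+1) :=
      pow_le_pow_left₀ (by linarith) hnorm_lb _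
    constructor
    · have : s * K y = (s * (x j - y j)) / ‖x - y‖ ^ (n+1) := by
        rw [hK]; simp only [hDrw]; ring
      rw [this]
      exact div_le_div₀ (by linarith [h1 y hy]) (h1 y hy) (by positivity) hDub
    · have : |K y| = |x j - y j| / ‖x - y‖ ^ (n+1) := by
        rw [hK]; simp only [hDrw, abs_div, abs_of_pos hDpos]
      rw [this]
      have hub : |x j - y j| ≤ 6*r := by
        have := coord_abs_le_norm j (x - y)
        rw [hsub] at this; linarith [h2 y hy]
      exact div_le_div₀ (by linarith) hub (by positivity) hDlb
  have hI : IntegrableOn K (ball c r) volume := by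
    apply Measure.integrableOn_of_bounded measure_ball_lt_top.ne
      hKm.aestronglyMeasurable (M := 6*r/(2*r)^(n+1))
    refine (ae_restrict_iff' measurableSet_ball).2 (ae_of_all _ fun y hy => ?_)
    exact (key y hy).2
  have hrw : (fun y => K y * chiR n c r y) = (ball c r).indicator K := by
    funext y
    by_cases hy : y ∈ ball c r <;> simp [chiR, indicator, hy]
  have hint : ∫ y, K y * chiR n c r y = ∫ y in ball c r, K y := by
    rw [hrw, integral_indicator measurableSet_ball]
  have hlow : 2*r/(6*r)^(n+1) * (volume (ball c r)).toReal ≤ s * ∫ y in ball c r, K y := by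
    rw [← integral_const_mul]
    exact setIntegral_ge_of_const_le_real measurableSet_ball measure_ball_lt_top.ne
      (fun y hy => (key y hy).1) (hI.const_mul s)
  have hvol : (volume (ball c r)).toReal = r ^ n * (volume (ball (0:Euc n) 1)).toReal := by
    rw [vol_ball j c hr.le, ENNReal.toReal_mul, ENNReal.toReal_ofReal (by positivity)]
  have hκeq : 2*r/(6*r)^(n+1) * (volume (ball c r)).toReal = κ n := by
    rw [hvol, κ]
    have hr' : r ≠ 0 := hr.ne'
    field_simp
    ring
  have hfin : κ n ≤ s * ∫ y, K y * chiR n c r y := by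
    rw [hint, ← hκeq]; exact hlow
  calc κ n ≤ s * ∫ y, K y * chiR n c r y := hfin
    _ ≤ |s * ∫ y, K y * chiR n c r y| := le_abs_self _
    _ = |∫ y, K y * chiR n c r y| := by rw [abs_mul, hs, one_mul]

lemma geom {n : ℕ} (j : Fin n) (c : Euc n) {r : ℝ} (hr : 0 < r)
    {x y : Euc n} (hx : x ∈ ball (c + (4*r) • EuclideanSpace.single j (1:ℝ)) r)
    (hy : y ∈ ball c r) :
    2*r ≤ x j - y j ∧ ‖x - y‖ ≤ 6*r := by
  set c' : Euc n := c + (4*r) • EuclideanSpace.single j (1:ℝ) with hc'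
  have hcj : c' j = c j + 4*r := by
    simp [hc', EuclideanSpace.single_apply]
  have hxn : ‖x - c'‖ < r := by rwa [mem_ball, dist_eq_norm] at hx
  have hyn : ‖y - c‖ < r := by rwa [mem_ball, dist_eq_norm] at hy
  have hxj : |x j - c' j| ≤ ‖x - c'‖ := coord_abs_le_norm j (x - c')
  have hyj : |y j - c j| ≤ ‖y - c‖ := coord_abs_le_norm j (y - c)
  have h1 : 2*r ≤ x j - y j := by
    have hx1 : -(r) < x j - c' j := by
      have := abs_lt.1 (lt_of_le_of_lt hxj hxn); exact this.1
    have hy1 : y j - c j < r := (abs_lt.1 (lt_of_le_of_lt hyj hyn)).2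
    have : x j - y j = (x j - c' j) + 4*r + (c j - y j) := by rw [hcj]; ring
    linarith
  refine ⟨h1, ?_⟩
  have hcc : ‖c' - c‖ = 4*r := by
    have : c' - c = (4*r) • EuclideanSpace.single j (1:ℝ) := by rw [hc']; abel
    rw [this, norm_smul, EuclideanSpace.norm_single]
    simp [abs_of_pos (by linarith : (0:ℝ) < 4*r)]
    linarith
  calc ‖x - y‖ = ‖(x - c') + (c' - c) + (c - y)‖ := by abel_nf
    _ ≤ ‖(x - c') + (c' - c)‖ + ‖c - y‖ := norm_add_le _ _
    _ ≤ ‖x - c'‖ + ‖c' - c‖ + ‖c - y‖ := by linarith [norm_add_le (x - c') (c' - c)]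
    _ ≤ 6*r := by
        rw [hcc]
        have : ‖c - y‖ = ‖y - c‖ := norm_sub_rev _ _
        linarith

lemma dist_centers {n : ℕ} (j : Fin n) (c : Euc n) {r : ℝ} (hr : 0 < r) :
    dist (c + (4*r) • EuclideanSpace.single j (1:ℝ)) c = 4*r := by
  rw [dist_eq_norm]
  have h : c + (4*r) • EuclideanSpace.single j (1:ℝ) - c
      = (4*r) • EuclideanSpace.single j (1:ℝ) := by abel
  rw [h, norm_smul, EuclideanSpace.norm_single]
  simp [abs_of_pos (by linarith : (0:ℝ) < 4*r)]
  linarith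

lemma not_mem_cb {n : ℕ} (c₁ c₂ : Euc n) {r : ℝ} (hr : 0 < r)
    (hd : dist c₁ c₂ = 4*r) {x : Euc n} (hx : x ∈ ball c₂ r) :
    x ∉ closedBall c₁ r := by
  intro hmem
  have h1 : dist x c₂ < r := mem_ball.1 hx
  have h2 : dist x c₁ ≤ r := mem_closedBall.1 hmem
  have h3 := dist_triangle c₁ x c₂
  rw [dist_comm c₁ x] at h3
  rw [hd] at h3
  linarith

end Stmt3Aux

open Stmt3Aux in
theorem stmt3 (n : ℕ) (hn : 0 < n) (X : BFL n)
    (hXballs : ∀ (c : Euc n) (r : ℝ), 0 < r → 0 < X.N (chiR n c r) ∧ X.N (chiR n c r) < ⊤)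
    (j : Fin n) (T : (Euc n → ℝ) → Euc n → ℝ) (hT : IsRieszOn n j X T) :
    ∃ C : ℝ≥0∞, 0 < C ∧ C < ⊤ ∧ ∀ (c : Euc n) (r : ℝ), 0 < r →
      X.N (chiR n c r) ≤ C * X.N (chiR n (c + (4 * r) • EuclideanSpace.single j (1 : ℝ)) r) ∧
      X.N (chiR n (c + (4 * r) • EuclideanSpace.single j (1 : ℝ)) r) ≤ C * X.N (chiR n c r) := by
  obtain ⟨⟨C₀, hC₀top, hC₀⟩, hrep⟩ := hT
  have hκ := κ_pos n
  refine ⟨ENNReal.ofReal (κ n)⁻¹ * C₀ + 1, ?_, ?_, ?_⟩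
  · exact lt_of_lt_of_le zero_lt_one le_add_self
  · exact ENNReal.add_lt_top.2 ⟨ENNReal.mul_lt_top ENNReal.ofReal_lt_top hC₀top, ENNReal.one_lt_top⟩
  intro c r hr
  have claim : ∀ (c₁ c₂ : Euc n) (s : ℝ), |s| = 1 →
      (∀ x ∈ ball c₂ r, x ∉ closedBall c₁ r) →
      (∀ x ∈ ball c₂ r, ∀ y ∈ ball c₁ r, 2*r ≤ s * (x j - y j) ∧ ‖x - y‖ ≤ 6*r) →
      X.N (chiR n c₂ r) ≤ (ENNReal.ofReal (κ n)⁻¹ * C₀) * X.N (chiR n c₁ r) := by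
    intro c₁ c₂ s hs hdisj hgeo
    have hfm : Measurable (chiR n c₁ r) := measurable_const.indicator measurableSet_ball
    have hfb : ∃ M : ℝ, ∀ x, |chiR n c₁ r x| ≤ M := by
      refine ⟨1, fun x => ?_⟩
      by_cases h : x ∈ ball c₁ r <;> simp [chiR, indicator, h]
    have hcs : HasCompactSupport (chiR n c₁ r) := by
      apply HasCompactSupport.intro (isCompact_closedBall c₁ r)
      intro x hx
      exact indicator_of_notMem (fun h => hx (ball_subset_closedBall h)) _
    have hts : tsupport (chiR n c₁ r) ⊆ closedBall c₁ r :=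
      closure_minimal ((support_indicator_subset).trans ball_subset_closedBall)
        Metric.isClosed_closedBall
    have hrep2 : ∀ x ∈ ball c₂ r, T (chiR n c₁ r) x
        = ∫ y, ((x j - y j) / ‖x - y‖ ^ ((n:ℝ)+1)) * chiR n c₁ r y :=
      fun x hx => hrep _ hfm hfb hcs x (fun h => hdisj x hx (hts h))
    have hpt : ∀ x, κ n * |chiR n c₂ r x| ≤ |T (chiR n c₁ r) x| := by
      intro x
      by_cases hx : x ∈ ball c₂ r
      · rw [show chiR n c₂ r x = 1 from indicator_of_mem hx _, abs_one, mul_one, hrep2 x hx]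
        exact int_lb j c₁ hr hs (fun y hy => (hgeo x hx y hy).1)
          (fun y hy => (hgeo x hx y hy).2)
      · rw [show chiR n c₂ r x = 0 from indicator_of_notMem hx _]
        simp [abs_nonneg]
    have hmono : X.N (chiR n c₂ r) ≤ X.N (fun x => (κ n)⁻¹ * T (chiR n c₁ r) x) := by
      apply X.mono
      intro x
      have h1 := hpt x
      calc |chiR n c₂ r x| = (κ n)⁻¹ * (κ n * |chiR n c₂ r x|) := by field_simp
        _ ≤ (κ n)⁻¹ * |T (chiR n c₁ r) x| :=
            mul_le_mul_of_nonneg_left h1 (inv_nonneg.2 hκ.le)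
        _ = |(κ n)⁻¹ * T (chiR n c₁ r) x| := by
            rw [abs_mul, abs_of_pos (inv_pos.2 hκ)]
    calc X.N (chiR n c₂ r) ≤ X.N (fun x => (κ n)⁻¹ * T (chiR n c₁ r) x) := hmono
      _ = ENNReal.ofReal |(κ n)⁻¹| * X.N (T (chiR n c₁ r)) := X.smul _ _
      _ ≤ ENNReal.ofReal (κ n)⁻¹ * (C₀ * X.N (chiR n c₁ r)) := by
          rw [abs_of_pos (inv_pos.2 hκ)]
          exact mul_le_mul_right (hC₀ _) _
      _ = (ENNReal.ofReal (κ n)⁻¹ * C₀) * X.N (chiR n c₁ r) := (mul_assoc _ _ _).symm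
  set c' : Euc n := c + (4 * r) • EuclideanSpace.single j (1:ℝ) with hc'
  have hd : dist c' c = 4*r := dist_centers j c hr
  constructor
  · have h := claim c' c (-1) (by norm_num)
      (fun x hx => not_mem_cb c' c hr hd hx)
      (fun x hx y hy => by
        obtain ⟨h1, h2⟩ := geom j c hr hy hx
        refine ⟨by linarith, by rw [norm_sub_rev]; exact h2⟩)
    exact h.trans (mul_le_mul_left le_self_add _)
  · have h := claim c c' 1 (by norm_num)
      (fun x hx => not_mem_cb c c' hr (by rw [dist_comm]; exact hd) hx)
      (fun x hx y hy => by
        obtain ⟨h1, h2⟩ := geom j c hr hx hy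
        exact ⟨by linarith, h2⟩)
    exact h.trans (mul_le_mul_left le_self_add _)
end
end

section
/- Let B and B' be balls in ℝ^n with the same radius r, c_{B'} = c_B + 4r·e_j. Then for every x ∈ B, ∫_{B'} (y_j - x_j)/|x-y|^{n+1} dy is comparable to 1, with implicit constants depending only on n. -/
open MeasureTheory Metric Set ENNReal

noncomputable section

lemma coord_abs_le_norm {n : ℕ} (v : Euc n) (j : Fin n) : |v j| ≤ ‖v‖ := by
  rw [EuclideanSpace.norm_eq, ← Real.sqrt_sq_eq_abs]
  apply Real.sqrt_le_sqrt
  have := Finset.single_le_sum (f := fun i => ‖v i‖ ^ 2) (fun i _ => sq_nonneg _)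
    (Finset.mem_univ j)
  simpa [Real.norm_eq_abs, sq_abs] using this

theorem stmt4 (n : ℕ) (hn : 0 < n) (j : Fin n) :
    ∃ C : ℝ, 0 < C ∧ ∀ (c : Euc n) (r : ℝ), 0 < r →
      ∀ x ∈ ball c r,
        C⁻¹ ≤ ∫ y in ball (c + (4 * r) • EuclideanSpace.single j (1 : ℝ)) r,
                (y j - x j) / ‖x - y‖ ^ ((n : ℝ) + 1) ∧
        (∫ y in ball (c + (4 * r) • EuclideanSpace.single j (1 : ℝ)) r,
                (y j - x j) / ‖x - y‖ ^ ((n : ℝ) + 1)) ≤ C := by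
  haveI : Nonempty (Fin n) := ⟨⟨0, hn⟩⟩
  set V := (volume (ball (0 : Euc n) 1)).toReal with hVdef
  have hV0 : 0 < V :=
    ENNReal.toReal_pos (measure_ball_pos volume 0 one_pos).ne' measure_ball_lt_top.ne
  have hlb : 0 < 2 * V / 6 ^ (n + 1) := by positivity
  have hub : 0 < 6 * V / 2 ^ (n + 1) := by positivity
  refine ⟨max (6 * V / 2 ^ (n + 1)) ((2 * V / 6 ^ (n + 1))⁻¹), lt_max_of_lt_left hub, ?_⟩
  intro c r hr x hx
  set c' := c + (4 * r) • EuclideanSpace.single j (1 : ℝ) with hc'def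
  have hrw : ∀ y : Euc n, ‖x - y‖ ^ ((n : ℝ) + 1) = ‖x - y‖ ^ (n + 1) := fun y => by
    rw [show ((n : ℝ) + 1) = ((n + 1 : ℕ) : ℝ) by push_cast; ring, Real.rpow_natCast]
  have key : ∀ y ∈ ball c' r, (2 * r ≤ y j - x j ∧ y j - x j ≤ 6 * r) ∧
      2 * r ≤ ‖x - y‖ ∧ ‖x - y‖ ≤ 6 * r := by
    intro y hy
    have hxc : ‖x - c‖ < r := by rwa [mem_ball, dist_eq_norm] at hx
    have hyc : ‖y - c'‖ < r := by rwa [mem_ball, dist_eq_norm] at hy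
    have hc'j : c' j = c j + 4 * r := by
      simp [hc'def, EuclideanSpace.single_apply]
    have hxj : |x j - c j| < r :=
      lt_of_le_of_lt (by simpa using coord_abs_le_norm (x - c) j) hxc
    have hyj : |y j - c' j| < r :=
      lt_of_le_of_lt (by simpa using coord_abs_le_norm (y - c') j) hyc
    rw [abs_lt] at hxj hyj
    rw [hc'j] at hyj
    have ha1 : 2 * r ≤ y j - x j := by linarith [hyj.1, hxj.2]
    have ha2 : y j - x j ≤ 6 * r := by linarith [hyj.2, hxj.1]
    refine ⟨⟨ha1, ha2⟩, ?_, ?_⟩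
    · calc 2 * r ≤ y j - x j := ha1
        _ ≤ |x j - y j| := (abs_sub_comm (x j) (y j)) ▸ le_abs_self _
        _ ≤ ‖x - y‖ := by
            have h := coord_abs_le_norm (x - y) j
            rwa [show (x - y) j = x j - y j from rfl] at h
    · have hcc' : ‖c - c'‖ = 4 * r := by
        rw [hc'def, show c - (c + (4 * r) • EuclideanSpace.single j (1 : ℝ))
          = -((4 * r) • EuclideanSpace.single j (1 : ℝ)) by abel, norm_neg, norm_smul,
          EuclideanSpace.norm_single]
        rw [norm_one, mul_one, Real.norm_eq_abs, abs_of_nonneg (by linarith)]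
      calc ‖x - y‖ = ‖(x - c) + (c - c') + (c' - y)‖ := by abel_nf
        _ ≤ ‖(x - c) + (c - c')‖ + ‖c' - y‖ := norm_add_le _ _
        _ ≤ ‖x - c‖ + ‖c - c'‖ + ‖c' - y‖ := by linarith [norm_add_le (x - c) (c - c')]
        _ ≤ 6 * r := by
            have : ‖c' - y‖ < r := by rwa [norm_sub_rev]
            rw [hcc']; linarith
  have h2r : (0:ℝ) < 2 * r := by linarith
  have hmeas : Measurable (fun y : Euc n => (y j - x j) / ‖x - y‖ ^ (n + 1)) := by
    apply Measurable.div
    · fun_prop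
    · fun_prop
  have hint : IntegrableOn (fun y : Euc n => (y j - x j) / ‖x - y‖ ^ (n + 1))
      (ball c' r) volume := by
    apply Measure.integrableOn_of_bounded (M := 6 * r / (2 * r) ^ (n + 1))
      measure_ball_lt_top.ne hmeas.aestronglyMeasurable
    filter_upwards [ae_restrict_mem measurableSet_ball] with y hy
    obtain ⟨⟨ha1, ha2⟩, hb1, hb2⟩ := key y hy
    rw [Real.norm_eq_abs, abs_of_nonneg (div_nonneg (by linarith) (by positivity))]
    exact div_le_div₀ (by positivity) ha2 (by positivity) (pow_le_pow_left₀ h2r.le hb1 _)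
  have hconst : IntegrableOn (fun _ : Euc n => (0:ℝ)) (ball c' r) volume := by
    simp [IntegrableOn]
  have hvol : (volume (ball c' r)).toReal = r ^ n * V := by
    rw [Measure.addHaar_ball volume c' hr.le, finrank_euclideanSpace_fin, ENNReal.toReal_mul,
      ENNReal.toReal_ofReal (by positivity)]
  have hlow : 2 * V / 6 ^ (n + 1) ≤ ∫ y in ball c' r, (y j - x j) / ‖x - y‖ ^ (n + 1) := by
    have h := setIntegral_mono_on
      (f := fun _ : Euc n => 2 * r / (6 * r) ^ (n + 1))
      (integrableOn_const measure_ball_lt_top.ne enorm_ne_top) hint measurableSet_ball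
      (fun y hy => by
        obtain ⟨⟨ha1, ha2⟩, hb1, hb2⟩ := key y hy
        exact div_le_div₀ (by linarith) ha1 (pow_pos (h2r.trans_le hb1) _)
          (pow_le_pow_left₀ (by linarith) hb2 _))
    rw [setIntegral_const, smul_eq_mul, measureReal_def, hvol] at h
    calc 2 * V / 6 ^ (n + 1) = r ^ n * V * (2 * r / (6 * r) ^ (n + 1)) := by
          rw [mul_pow]; field_simp; ring
      _ ≤ _ := h
  have hup : (∫ y in ball c' r, (y j - x j) / ‖x - y‖ ^ (n + 1)) ≤ 6 * V / 2 ^ (n + 1) := by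
    have h := setIntegral_mono_on
      (g := fun _ : Euc n => 6 * r / (2 * r) ^ (n + 1))
      hint (integrableOn_const measure_ball_lt_top.ne enorm_ne_top) measurableSet_ball
      (fun y hy => by
        obtain ⟨⟨ha1, ha2⟩, hb1, hb2⟩ := key y hy
        exact div_le_div₀ (by positivity) ha2 (by positivity)
          (pow_le_pow_left₀ h2r.le hb1 _))
    rw [setIntegral_const, smul_eq_mul, measureReal_def, hvol] at h
    calc _ ≤ r ^ n * V * (6 * r / (2 * r) ^ (n + 1)) := h
      _ = 6 * V / 2 ^ (n + 1) := by rw [mul_pow]; field_simp; ring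
  simp only [hrw]
  constructor
  · calc (max (6 * V / 2 ^ (n + 1)) ((2 * V / 6 ^ (n + 1))⁻¹))⁻¹
        ≤ 2 * V / 6 ^ (n + 1) := by
          rw [inv_le_comm₀ (by positivity) hlb]
          exact le_max_right _ _
      _ ≤ _ := hlow
  · exact hup.trans (le_max_left _ _)
end
end

section
/- Let X be a Banach lattice of measurable functions in ℝ^n containing characteristic functions of balls. If all the Riesz transforms R_1,…,R_n are bounded on X, then sup over all balls B of |B|^{-1} ‖χ_B‖_X · ‖Mχ_B‖_{X'} < ∞, where M is the Hardy–Littlewood maximal operator and X' is the Köthe dual of X. -/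
open MeasureTheory Metric Set ENNReal

noncomputable section

namespace S5

/-- The Riesz kernel. -/
def K (n : ℕ) (j : Fin n) (x y : Euc n) : ℝ := (x j - y j) / ‖x - y‖ ^ ((n : ℝ) + 1)

lemma K_swap {n : ℕ} (j : Fin n) (x y : Euc n) : K n j y x = - K n j x y := by
  unfold K
  rw [norm_sub_rev, show y j - x j = -(x j - y j) by ring, neg_div]

lemma continuous_coord {n : ℕ} (j : Fin n) : Continuous fun v : Euc n => v j :=
  PiLp.continuous_apply 2 _ j

set_option maxHeartbeats 1000000 in
lemma abs_coord_le {n : ℕ} (v : Euc n) (j : Fin n) : |v j| ≤ ‖v‖ := by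
  have h1 : v j ^ 2 ≤ ∑ i, ‖v i‖ ^ 2 := by
    have := Finset.single_le_sum (f := fun i => ‖v i‖ ^ 2)
      (fun i _ => sq_nonneg _) (Finset.mem_univ j)
    simpa [Real.norm_eq_abs, sq_abs] using this
  calc |v j| = Real.sqrt (v j ^ 2) := (Real.sqrt_sq_eq_abs _).symm
    _ ≤ Real.sqrt (∑ i, ‖v i‖ ^ 2) := Real.sqrt_le_sqrt h1
    _ = ‖v‖ := (EuclideanSpace.norm_eq v).symm

lemma abs_coord_sub_le {n : ℕ} (x y : Euc n) (j : Fin n) : |x j - y j| ≤ ‖x - y‖ := by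
  have := abs_coord_le (x - y) j
  simpa using this

lemma K_pos_lower {n : ℕ} (j : Fin n) {x y : Euc n} {α U : ℝ} (hα : 0 < α)
    (h1 : α ≤ x j - y j) (hU : ‖x - y‖ ≤ U) :
    α / U ^ ((n : ℝ) + 1) ≤ K n j x y := by
  have hnorm : 0 < ‖x - y‖ := by
    have h2 := abs_coord_sub_le x y j
    have : (0:ℝ) < |x j - y j| := lt_of_lt_of_le hα (le_trans h1 (le_abs_self _))
    linarith
  have hUpos : 0 < U := lt_of_lt_of_le hnorm hU
  unfold K
  exact div_le_div₀ (by linarith) h1 (Real.rpow_pos_of_pos hnorm _)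
    (Real.rpow_le_rpow (le_of_lt hnorm) hU (by positivity))

lemma abs_K_le {n : ℕ} (j : Fin n) {x y : Euc n} {L U : ℝ} (hL : 0 < L)
    (h1 : L ≤ ‖x - y‖) (hU : ‖x - y‖ ≤ U) :
    |K n j x y| ≤ U / L ^ ((n : ℝ) + 1) := by
  have habs : |x j - y j| ≤ ‖x - y‖ := abs_coord_sub_le x y j
  unfold K
  rw [abs_div, abs_of_nonneg (Real.rpow_nonneg (norm_nonneg _) _)]
  exact div_le_div₀ (le_trans (norm_nonneg (x-y)) hU) (le_trans habs hU)
    (Real.rpow_pos_of_pos hL _) (Real.rpow_le_rpow (le_of_lt hL) h1 (by positivity))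

lemma measurable_K {n : ℕ} (j : Fin n) :
    Measurable fun p : Euc n × Euc n => K n j p.1 p.2 := by
  unfold K
  apply Measurable.div
  · exact ((continuous_coord j).comp continuous_fst).measurable.sub
      ((continuous_coord j).comp continuous_snd).measurable
  · exact ((continuous_fst.sub continuous_snd).norm.rpow_const
      (fun x => Or.inr (by positivity))).measurable

lemma measurable_chiR {n : ℕ} (c : Euc n) (r : ℝ) : Measurable (chiR n c r) :=
  measurable_const.indicator measurableSet_ball

lemma chiR_nonneg {n : ℕ} (c : Euc n) (r : ℝ) (x : Euc n) : 0 ≤ chiR n c r x := by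
  unfold chiR; exact Set.indicator_nonneg (fun _ _ => zero_le_one) x

lemma chiR_le_one {n : ℕ} (c : Euc n) (r : ℝ) (x : Euc n) : chiR n c r x ≤ 1 := by
  unfold chiR
  exact Set.indicator_le' (fun _ _ => le_refl _) (fun _ _ => zero_le_one) x

lemma chiR_of_mem {n : ℕ} {c : Euc n} {r : ℝ} {x : Euc n} (h : x ∈ ball c r) :
    chiR n c r x = 1 := by unfold chiR; simp [h]

lemma chiR_of_not_mem {n : ℕ} {c : Euc n} {r : ℝ} {x : Euc n} (h : x ∉ ball c r) :
    chiR n c r x = 0 := by unfold chiR; simp [h]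

lemma measurable_kint {n : ℕ} (j : Fin n) {h : Euc n → ℝ} (hh : Measurable h) :
    Measurable fun x => ∫ y, K n j x y * h y :=
  (StronglyMeasurable.integral_prod_right'
    (f := fun p : Euc n × Euc n => K n j p.1 p.2 * h p.2)
    (((measurable_K j).mul (hh.comp measurable_snd)).stronglyMeasurable)).measurable

/-- The Riesz transform of the indicator of a ball, as an explicit integral. -/
def Phi (n : ℕ) (j : Fin n) (c : Euc n) (r : ℝ) (y : Euc n) : ℝ :=
  ∫ x, K n j y x * chiR n c r x

lemma measurable_Phi {n : ℕ} (j : Fin n) (c : Euc n) (r : ℝ) :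
    Measurable (Phi n j c r) :=
  measurable_kint j (measurable_chiR c r)

lemma kdual_mono {n : ℕ} (X : BFL n) {g₁ g₂ : Euc n → ℝ≥0∞} (h : ∀ x, g₁ x ≤ g₂ x) :
    kdual X g₁ ≤ kdual X g₂ := by
  unfold kdual
  exact iSup_mono fun f => iSup_mono fun hf => lintegral_mono fun x =>
    mul_le_mul_right (h x) _

lemma pairing_le_kdual {n : ℕ} (X : BFL n) (u : Euc n → ℝ) (hu : Measurable u) {c₀ : ℝ}
    (hc₀ : 0 < c₀) (hXu : X.N u ≤ ENNReal.ofReal c₀) (g : Euc n → ℝ≥0∞) :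
    ∫⁻ x, ENNReal.ofReal |u x| * g x ≤ ENNReal.ofReal c₀ * kdual X g := by
  have hφm : Measurable fun x => c₀⁻¹ * u x := hu.const_mul _
  have hφ : X.N (fun x => c₀⁻¹ * u x) ≤ 1 := by
    rw [X.smul, abs_of_nonneg (by positivity)]
    calc ENNReal.ofReal c₀⁻¹ * X.N u ≤ ENNReal.ofReal c₀⁻¹ * ENNReal.ofReal c₀ :=
      mul_le_mul_right hXu _
    _ = 1 := by
      rw [← ENNReal.ofReal_mul (by positivity), inv_mul_cancel₀ (ne_of_gt hc₀),
        ENNReal.ofReal_one]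
  have hle : (∫⁻ x, ENNReal.ofReal |c₀⁻¹ * u x| * g x) ≤ kdual X g := by
    unfold kdual
    exact le_iSup_of_le (fun x => c₀⁻¹ * u x) (le_iSup_of_le ⟨hφm, hφ⟩ le_rfl)
  calc ∫⁻ x, ENNReal.ofReal |u x| * g x
      = ∫⁻ x, ENNReal.ofReal c₀ * (ENNReal.ofReal |c₀⁻¹ * u x| * g x) := by
        congr 1; funext x
        rw [← mul_assoc, ← ENNReal.ofReal_mul (le_of_lt hc₀), abs_mul,
          abs_of_nonneg (le_of_lt (inv_pos.2 hc₀)), ← mul_assoc,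
          mul_inv_cancel₀ (ne_of_gt hc₀), one_mul]
    _ = ENNReal.ofReal c₀ * ∫⁻ x, ENNReal.ofReal |c₀⁻¹ * u x| * g x :=
        lintegral_const_mul' _ _ ENNReal.ofReal_ne_top
    _ ≤ ENNReal.ofReal c₀ * kdual X g := mul_le_mul_right hle _

lemma nontrivial_euc {n : ℕ} (hn : 0 < n) : Nontrivial (Euc n) := by
  refine ⟨⟨0, EuclideanSpace.single ⟨0, hn⟩ 1, fun h => ?_⟩⟩
  have := congrFun (congrArg (fun v : Euc n => (v : Fin n → ℝ)) h) ⟨0, hn⟩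
  simp [EuclideanSpace.single_apply] at this

lemma vol_ball {n : ℕ} (hn : 0 < n) (c : Euc n) {r : ℝ} (hr : 0 ≤ r) :
    volume (ball c r) = ENNReal.ofReal (r ^ n) * volume (ball (0 : Euc n) 1) := by
  haveI := nontrivial_euc hn
  rw [Measure.addHaar_ball volume c hr, finrank_euclideanSpace_fin]

lemma vol_ball_toReal {n : ℕ} (hn : 0 < n) (c : Euc n) {r : ℝ} (hr : 0 ≤ r) :
    (volume (ball c r)).toReal = r ^ n * (volume (ball (0 : Euc n) 1)).toReal := by
  rw [vol_ball hn c hr, ENNReal.toReal_mul, ENNReal.toReal_ofReal (by positivity)]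

set_option maxHeartbeats 1000000 in
lemma pairing_bound {n : ℕ} (X : BFL n) (j : Fin n) (T : (Euc n → ℝ) → Euc n → ℝ)
    (hT : IsRieszOn n j X T) {c₀ : ℝ} (hc₀ : 0 < c₀)
    (hTC : ∀ f, X.N (T f) ≤ ENNReal.ofReal c₀ * X.N f)
    (c : Euc n) {r : ℝ} (hr : 0 < r) (h : Euc n → ℝ) (hmeas : Measurable h)
    (hXh : X.N h ≤ 1) {M : ℝ} (hbd : ∀ y, |h y| ≤ M)
    (hcs : HasCompactSupport h) (hsep : ∀ y ∈ tsupport h, 2 * r ≤ dist y c) :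
    ENNReal.ofReal |∫ y, h y * Phi n j c r y| ≤
      ENNReal.ofReal c₀ * kdual X (chiE n c r) := by
  have hM : 0 ≤ M := le_trans (abs_nonneg (h 0)) (hbd 0)
  obtain ⟨R₀, hR₀⟩ := hcs.isBounded.subset_closedBall c
  set R : ℝ := max R₀ 0 with hRdef
  have hR : tsupport h ⊆ closedBall c R :=
    hR₀.trans (closedBall_subset_closedBall (le_max_left _ _))
  have hR0 : 0 ≤ R := le_max_right _ _
  set MK : ℝ := (R + r) / r ^ ((n : ℝ) + 1) with hMKdef
  have hMK0 : 0 ≤ MK := by positivity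
  -- kernel bound on ball × tsupport h
  have hK : ∀ x ∈ ball c r, ∀ y ∈ tsupport h, |K n j x y| ≤ MK := by
    intro x hx y hy
    have h2r := hsep y hy
    have hx' : dist x c < r := mem_ball.mp hx
    have hyR : dist y c ≤ R := mem_closedBall.mp (hR hy)
    have h1 : r ≤ ‖x - y‖ := by
      rw [← dist_eq_norm]
      have htri : dist y c ≤ dist y x + dist x c := dist_triangle y x c
      have : dist x y = dist y x := dist_comm x y
      linarith
    have h2 : ‖x - y‖ ≤ R + r := by
      rw [← dist_eq_norm]
      have htri : dist x y ≤ dist x c + dist c y := dist_triangle x c y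
      have : dist c y = dist y c := dist_comm c y
      linarith
    exact abs_K_le j hr h1 h2
  set u : Euc n → ℝ := fun x => ∫ y, K n j x y * h y with hudef
  have hu_meas : Measurable u := measurable_kint j hmeas
  set chiRu : Euc n → ℝ := fun x => chiR n c r x * u x with hchiRudef
  have hchiRu_meas : Measurable chiRu := (measurable_chiR c r).mul hu_meas
  set Mu : ℝ := MK * M * (volume (closedBall c R)).toReal with hMudef
  have hMu0 : 0 ≤ Mu := by positivity
  -- bound for u on the ball
  have hu_bd : ∀ x ∈ ball c r, |u x| ≤ Mu := by
    intro x hx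
    have hle : ∀ y, ‖K n j x y * h y‖ ≤
        (closedBall c R).indicator (fun _ => MK * M) y := by
      intro y
      by_cases hy : y ∈ tsupport h
      · rw [Set.indicator_of_mem (hR hy), Real.norm_eq_abs, abs_mul]
        exact mul_le_mul (hK x hx y hy) (hbd y) (abs_nonneg _) hMK0
      · have : h y = 0 := image_eq_zero_of_notMem_tsupport hy
        simp only [this, mul_zero, norm_zero]
        exact Set.indicator_nonneg (fun _ _ => by positivity) y
    have hint : Integrable ((closedBall c R).indicator (fun _ => MK * M)) := by
      rw [integrable_indicator_iff measurableSet_closedBall]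
      exact (integrableOn_const_iff (by finiteness)).mpr (Or.inr measure_closedBall_lt_top)
    calc |u x| ≤ ∫ y, ‖K n j x y * h y‖ := by
          simpa [Real.norm_eq_abs] using norm_integral_le_integral_norm
            (f := fun y => K n j x y * h y) (μ := volume)
      _ ≤ ∫ y, (closedBall c R).indicator (fun _ => MK * M) y :=
          integral_mono_of_nonneg (ae_of_all _ fun y => norm_nonneg _) hint
            (ae_of_all _ hle)
      _ = (volume (closedBall c R)).toReal * (MK * M) := by
          rw [integral_indicator_const _ measurableSet_closedBall]; simp [Measure.real]
      _ = Mu := by rw [hMudef]; ring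
  -- kernel representation on the ball
  have hrep : ∀ x ∈ ball c r, T h x = u x := by
    intro x hx
    have hx' : x ∉ tsupport h := by
      intro hmem
      have := hsep x hmem
      have := mem_ball.mp hx
      linarith
    exact hT.2 h hmeas ⟨M, hbd⟩ hcs x hx'
  -- X-norm bound for chiRu
  have hXchiRu : X.N chiRu ≤ ENNReal.ofReal c₀ := by
    have hptw : ∀ x, |chiRu x| ≤ |T h x| := by
      intro x
      by_cases hx : x ∈ ball c r
      · rw [hchiRudef]
        simp only [chiR_of_mem hx, one_mul, hrep x hx]
        exact le_rfl
      · rw [hchiRudef]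
        simp only [chiR_of_not_mem hx, zero_mul, abs_zero]
        exact abs_nonneg _
    calc X.N chiRu ≤ X.N (T h) := X.mono _ _ hptw
      _ ≤ ENNReal.ofReal c₀ * X.N h := hTC h
      _ ≤ ENNReal.ofReal c₀ * 1 := mul_le_mul_right hXh _
      _ = ENNReal.ofReal c₀ := mul_one _
  -- integrability of chiRu
  have hchiRu_int : Integrable chiRu := by
    apply Integrable.mono' (g := (closedBall c r).indicator fun _ => Mu)
    · rw [integrable_indicator_iff measurableSet_closedBall]
      exact (integrableOn_const_iff (by finiteness)).mpr (Or.inr measure_closedBall_lt_top)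
    · exact hchiRu_meas.aestronglyMeasurable
    · refine ae_of_all _ fun x => ?_
      by_cases hx : x ∈ ball c r
      · rw [Set.indicator_of_mem (ball_subset_closedBall hx)]
        rw [hchiRudef]
        simp only [Real.norm_eq_abs, chiR_of_mem hx, one_mul]
        exact hu_bd x hx
      · rw [hchiRudef]
        simp only [Real.norm_eq_abs, chiR_of_not_mem hx, zero_mul, abs_zero]
        exact Set.indicator_nonneg (fun _ _ => hMu0) x
  -- Fubini
  have hF : Integrable (Function.uncurry fun y x =>
      h y * (K n j y x * chiR n c r x)) (volume : Measure (Euc n × Euc n)) := by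
    apply Integrable.mono'
      (g := (closedBall c R ×ˢ closedBall c r).indicator fun _ => M * MK)
    · rw [integrable_indicator_iff (measurableSet_closedBall.prod
        measurableSet_closedBall)]
      apply (integrableOn_const_iff (by finiteness)).mpr
      refine Or.inr ?_
      rw [Measure.volume_eq_prod, Measure.prod_prod]
      exact ENNReal.mul_lt_top measure_closedBall_lt_top measure_closedBall_lt_top
    · exact ((hmeas.comp measurable_fst).mul ((measurable_K j).mul
        ((measurable_chiR c r).comp measurable_snd))).aestronglyMeasurable
    · refine ae_of_all _ fun p => ?_
      simp only [Function.uncurry, Real.norm_eq_abs]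
      by_cases hy : p.1 ∈ tsupport h
      · by_cases hx : p.2 ∈ ball c r
        · rw [Set.indicator_of_mem (Set.mk_mem_prod (hR hy)
            (ball_subset_closedBall hx))]
          have hKb : |K n j p.1 p.2| ≤ MK := by
            have := hK p.2 hx p.1 hy
            rw [show K n j p.1 p.2 = - K n j p.2 p.1 from K_swap j p.2 p.1]
            simpa using this
          calc |h p.1 * (K n j p.1 p.2 * chiR n c r p.2)| =
              |h p.1| * (|K n j p.1 p.2| * |chiR n c r p.2|) := by
                rw [abs_mul, abs_mul]
            _ ≤ M * (MK * 1) := by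
                have h5 : |chiR n c r p.2| ≤ 1 := by
                  rw [abs_of_nonneg (chiR_nonneg c r p.2)]
                  exact chiR_le_one c r p.2
                have h6 : |K n j p.1 p.2| * |chiR n c r p.2| ≤ MK * 1 :=
                  mul_le_mul hKb h5 (abs_nonneg _) hMK0
                exact mul_le_mul (hbd _) h6 (by positivity) hM
            _ = M * MK := by ring
        · rw [chiR_of_not_mem hx]
          simp only [mul_zero, abs_zero]
          exact Set.indicator_nonneg (fun _ _ => by positivity) p
      · rw [image_eq_zero_of_notMem_tsupport hy]
        simp only [zero_mul, abs_zero]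
        exact Set.indicator_nonneg (fun _ _ => by positivity) p
  have hswap : ∫ y, h y * Phi n j c r y = - ∫ x, chiRu x := by
    have h1 : ∫ y, h y * Phi n j c r y =
        ∫ y, ∫ x, h y * (K n j y x * chiR n c r x) := by
      congr 1; funext y
      rw [Phi, ← integral_const_mul]
    have h2 := integral_integral_swap hF
    have h3 : ∀ x, (∫ y, h y * (K n j y x * chiR n c r x)) = - chiRu x := by
      intro x
      have : ∀ y, h y * (K n j y x * chiR n c r x) =
          chiR n c r x * -(K n j x y * h y) := by
        intro y
        rw [show K n j y x = - K n j x y from K_swap j x y]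
        ring
      rw [hchiRudef]
      simp only [this]
      rw [integral_const_mul, integral_neg]
      simp [hudef, mul_neg]
    rw [h1, h2]
    simp only [h3]
    rw [integral_neg]
  -- final chain
  calc ENNReal.ofReal |∫ y, h y * Phi n j c r y|
      = ENNReal.ofReal |∫ x, chiRu x| := by rw [hswap, abs_neg]
    _ ≤ ENNReal.ofReal (∫ x, |chiRu x|) := by
        apply ENNReal.ofReal_le_ofReal
        simpa [Real.norm_eq_abs] using
          norm_integral_le_integral_norm (f := chiRu) (μ := volume)
    _ = ∫⁻ x, ENNReal.ofReal |chiRu x| := by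
        rw [ofReal_integral_eq_lintegral_ofReal hchiRu_int.abs
          (ae_of_all _ fun x => abs_nonneg _)]
    _ = ∫⁻ x, ENNReal.ofReal |chiRu x| * chiE n c r x := by
        congr 1; funext x
        by_cases hx : x ∈ ball c r
        · rw [chiE, Set.indicator_of_mem hx, mul_one]
        · rw [hchiRudef]
          simp only [chiR_of_not_mem hx, zero_mul, abs_zero, ENNReal.ofReal_zero,
            MulZeroClass.zero_mul]
    _ ≤ ENNReal.ofReal c₀ * kdual X (chiE n c r) :=
        pairing_le_kdual X chiRu hchiRu_meas hc₀ hXchiRu _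

lemma abs_Phi_le {n : ℕ} (j : Fin n) (c : Euc n) {r D : ℝ} (hr : 0 < r) {y : Euc n}
    (h1 : 2 * r ≤ dist y c) (h2 : dist y c ≤ D) :
    |Phi n j c r y| ≤ (D + r) / r ^ ((n : ℝ) + 1) * (volume (closedBall c r)).toReal := by
  have hD : 0 < D := lt_of_lt_of_le (by linarith) h2
  set MK : ℝ := (D + r) / r ^ ((n : ℝ) + 1) with hMKdef
  have hMK0 : 0 ≤ MK := by positivity
  have hKb : ∀ x, ‖K n j y x * chiR n c r x‖ ≤
      (closedBall c r).indicator (fun _ => MK) x := by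
    intro x
    by_cases hx : x ∈ ball c r
    · have hx' : dist x c < r := mem_ball.mp hx
      have hL : r ≤ ‖y - x‖ := by
        rw [← dist_eq_norm]
        have := dist_triangle y x c
        have hc : dist x c = dist x c := rfl
        linarith [dist_comm y x ▸ this]
      have hU : ‖y - x‖ ≤ D + r := by
        rw [← dist_eq_norm]
        have := dist_triangle y c x
        have : dist y x ≤ dist y c + dist c x := this
        have h4 : dist c x = dist x c := dist_comm c x
        linarith
      rw [Set.indicator_of_mem (ball_subset_closedBall hx), Real.norm_eq_abs, abs_mul]
      have h5 : |chiR n c r x| ≤ 1 := by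
        rw [abs_of_nonneg (chiR_nonneg c r x)]; exact chiR_le_one c r x
      calc |K n j y x| * |chiR n c r x| ≤ MK * 1 :=
          mul_le_mul (abs_K_le j hr hL hU) h5 (abs_nonneg _) hMK0
        _ = MK := mul_one _
    · rw [chiR_of_not_mem hx]
      simp only [mul_zero, norm_zero]
      exact Set.indicator_nonneg (fun _ _ => hMK0) x
  have hint : Integrable ((closedBall c r).indicator fun _ : Euc n => MK) := by
    rw [integrable_indicator_iff measurableSet_closedBall]
    exact (integrableOn_const_iff (by finiteness)).mpr (Or.inr measure_closedBall_lt_top)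
  calc |Phi n j c r y| ≤ ∫ x, ‖K n j y x * chiR n c r x‖ := by
        simpa [Real.norm_eq_abs, Phi] using norm_integral_le_integral_norm
          (f := fun x => K n j y x * chiR n c r x) (μ := volume)
    _ ≤ ∫ x, (closedBall c r).indicator (fun _ => MK) x :=
        integral_mono_of_nonneg (ae_of_all _ fun x => norm_nonneg _) hint
          (ae_of_all _ hKb)
    _ = (volume (closedBall c r)).toReal * MK := by
        rw [integral_indicator_const _ measurableSet_closedBall]; simp [Measure.real]
    _ = MK * (volume (closedBall c r)).toReal := mul_comm _ _

set_option maxHeartbeats 1000000 in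
lemma far_piece {n : ℕ} (X : BFL n) (j : Fin n) (T : (Euc n → ℝ) → Euc n → ℝ)
    (hT : IsRieszOn n j X T) {c₀ : ℝ} (hc₀ : 0 < c₀)
    (hTC : ∀ f, X.N (T f) ≤ ENNReal.ofReal c₀ * X.N f)
    (c : Euc n) {r : ℝ} (hr : 0 < r) {s : ℝ} (hs : s = 1 ∨ s = -1)
    (E : Set (Euc n)) (hEcl : IsClosed E) (hfar : ∀ y ∈ E, 2 * r ≤ dist y c)
    (hEΦ : ∀ y ∈ E, 0 ≤ s * Phi n j c r y)
    (f : Euc n → ℝ) (hf : Measurable f) (hXf : X.N f ≤ 1) :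
    (∫⁻ y, E.indicator
        (fun y => ENNReal.ofReal |f y| * ENNReal.ofReal (s * Phi n j c r y)) y)
      ≤ ENNReal.ofReal c₀ * kdual X (chiE n c r) := by
  set W : Euc n → ℝ≥0∞ := fun y => ENNReal.ofReal (s * Phi n j c r y) with hWdef
  have hWmeas : Measurable W := ((measurable_Phi j c r).const_mul s).ennreal_ofReal
  set hseq : ℕ → Euc n → ℝ :=
    fun N y => (E ∩ ball c N).indicator (fun y => min |f y| N) y with hseqdef
  have hsetm : ∀ N : ℕ, MeasurableSet (E ∩ ball c (N : ℝ)) := fun N =>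
    hEcl.measurableSet.inter measurableSet_ball
  have hmeasN : ∀ N, Measurable (hseq N) := fun N =>
    (hf.abs.min measurable_const).indicator (hsetm N)
  have hnnN : ∀ N y, 0 ≤ hseq N y := fun N y =>
    Set.indicator_nonneg (fun z _ => le_min (abs_nonneg _) (Nat.cast_nonneg N)) y
  have hleF : ∀ N y, hseq N y ≤ |f y| := by
    intro N y
    by_cases hy : y ∈ E ∩ ball c (N : ℝ)
    · rw [hseqdef]; simp only [Set.indicator_of_mem hy]; exact min_le_left _ _
    · rw [hseqdef]; simp only [Set.indicator_of_notMem hy]; exact abs_nonneg _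
  have hXN : ∀ N, X.N (hseq N) ≤ 1 := by
    intro N
    refine le_trans (X.mono f (hseq N) fun y => ?_) hXf
    rw [abs_of_nonneg (hnnN N y)]; exact hleF N y
  have hbdN : ∀ N y, |hseq N y| ≤ (N : ℝ) := by
    intro N y
    rw [abs_of_nonneg (hnnN N y)]
    by_cases hy : y ∈ E ∩ ball c (N : ℝ)
    · rw [hseqdef]; simp only [Set.indicator_of_mem hy]; exact min_le_right _ _
    · rw [hseqdef]; simp only [Set.indicator_of_notMem hy]; exact Nat.cast_nonneg N
  have hsupp : ∀ N, Function.support (hseq N) ⊆ E ∩ ball c (N : ℝ) := fun N =>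
    Set.support_indicator_subset
  have hcsN : ∀ N, HasCompactSupport (hseq N) := by
    intro N
    apply IsCompact.of_isClosed_subset (isCompact_closedBall c (N : ℝ))
      isClosed_closure
    exact closure_minimal (fun y hy => ball_subset_closedBall ((hsupp N hy).2))
      Metric.isClosed_closedBall
  have htsuppE : ∀ N, tsupport (hseq N) ⊆ E := fun N =>
    closure_minimal (fun y hy => (hsupp N hy).1) hEcl
  have hsepN : ∀ N, ∀ y ∈ tsupport (hseq N), 2 * r ≤ dist y c := fun N y hy =>
    hfar y (htsuppE N hy)
  -- per-N bound
  have hkey : ∀ N : ℕ, (∫⁻ y, ENNReal.ofReal (hseq N y) * W y)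
      ≤ ENNReal.ofReal c₀ * kdual X (chiE n c r) := by
    intro N
    have hptw : ∀ y, ENNReal.ofReal (hseq N y) * W y =
        ENNReal.ofReal (hseq N y * (s * Phi n j c r y)) := by
      intro y
      by_cases hy : y ∈ E ∩ ball c (N : ℝ)
      · rw [hWdef, ← ENNReal.ofReal_mul (hnnN N y)]
      · have h0 : hseq N y = 0 := by
          rw [hseqdef]; simp only [Set.indicator_of_notMem hy]
        simp [h0]
    have hg2nn : ∀ y, 0 ≤ hseq N y * (s * Phi n j c r y) := by
      intro y
      by_cases hy : y ∈ E ∩ ball c (N : ℝ)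
      · exact mul_nonneg (hnnN N y) (hEΦ y hy.1)
      · have h0 : hseq N y = 0 := by
          rw [hseqdef]; simp only [Set.indicator_of_notMem hy]
        simp [h0]
    have hg2int : Integrable (fun y => hseq N y * (s * Phi n j c r y)) := by
      apply Integrable.mono' (g := (closedBall c (N : ℝ)).indicator fun _ =>
        (N : ℝ) * (((N : ℝ) + r) / r ^ ((n : ℝ) + 1) *
          (volume (closedBall c r)).toReal))
      · rw [integrable_indicator_iff measurableSet_closedBall]
        exact (integrableOn_const_iff (by finiteness)).mpr (Or.inr measure_closedBall_lt_top)
      · exact ((hmeasN N).mul ((measurable_Phi j c r).const_mul s)).aestronglyMeasurable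
      · refine ae_of_all _ fun y => ?_
        by_cases hy : y ∈ E ∩ ball c (N : ℝ)
        · rw [Set.indicator_of_mem (ball_subset_closedBall hy.2)]
          have hdist : dist y c ≤ (N : ℝ) := le_of_lt (mem_ball.mp hy.2)
          have hPhi := abs_Phi_le j c hr (hfar y hy.1) hdist
          have habs : |s * Phi n j c r y| = |Phi n j c r y| := by
            rcases hs with h | h <;> simp [h, abs_mul]
          rw [Real.norm_eq_abs, abs_mul, habs]
          apply mul_le_mul (hbdN N y) hPhi (abs_nonneg _) (Nat.cast_nonneg N)
        · have h0 : hseq N y = 0 := by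
            rw [hseqdef]; simp only [Set.indicator_of_notMem hy]
          rw [h0]
          simp only [zero_mul, norm_zero]
          refine Set.indicator_nonneg (fun z _ => ?_) y
          have : (0:ℝ) < r ^ ((n : ℝ) + 1) := by positivity
          positivity
    calc (∫⁻ y, ENNReal.ofReal (hseq N y) * W y)
        = ∫⁻ y, ENNReal.ofReal (hseq N y * (s * Phi n j c r y)) := by
          congr 1; funext y; exact hptw y
      _ = ENNReal.ofReal (∫ y, hseq N y * (s * Phi n j c r y)) :=
          (ofReal_integral_eq_lintegral_ofReal hg2int (ae_of_all _ hg2nn)).symm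
      _ ≤ ENNReal.ofReal |∫ y, hseq N y * Phi n j c r y| := by
          apply ENNReal.ofReal_le_ofReal
          have heq : (∫ y, hseq N y * (s * Phi n j c r y)) =
              s * ∫ y, hseq N y * Phi n j c r y := by
            rw [← integral_const_mul]
            congr 1; funext y; ring
          rw [heq]
          rcases hs with h | h
          · rw [h, one_mul]; exact le_abs_self _
          · rw [h]; simpa using neg_abs_le (∫ y, hseq N y * Phi n j c r y) |>.trans
              (le_refl _) |> fun _ => neg_le_abs _ |>.trans (le_refl _)
      _ ≤ ENNReal.ofReal c₀ * kdual X (chiE n c r) :=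
          pairing_bound X j T hT hc₀ hTC c hr (hseq N) (hmeasN N) (hXN N)
            (hbdN N) (hcsN N) (hsepN N)
  -- monotone convergence
  have hmono : Monotone fun N : ℕ => fun y => ENNReal.ofReal (hseq N y) * W y := by
    intro N M hNM
    intro y
    apply mul_le_mul_left
    apply ENNReal.ofReal_le_ofReal
    by_cases hy : y ∈ E ∩ ball c (N : ℝ)
    · have hy' : y ∈ E ∩ ball c (M : ℝ) :=
        ⟨hy.1, ball_subset_ball (by exact_mod_cast hNM) hy.2⟩
      rw [hseqdef]
      simp only [Set.indicator_of_mem hy, Set.indicator_of_mem hy']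
      exact min_le_min le_rfl (by exact_mod_cast hNM)
    · rw [hseqdef]
      simp only [Set.indicator_of_notMem hy]
      exact hnnN M y
  have hptsup : ∀ y, E.indicator
      (fun y => ENNReal.ofReal |f y| * ENNReal.ofReal (s * Phi n j c r y)) y =
      ⨆ N : ℕ, ENNReal.ofReal (hseq N y) * W y := by
    intro y
    by_cases hy : y ∈ E
    · rw [Set.indicator_of_mem hy]
      have hsup : (⨆ N : ℕ, ENNReal.ofReal (hseq N y)) = ENNReal.ofReal |f y| := by
        apply le_antisymm
        · exact iSup_le fun N => ENNReal.ofReal_le_ofReal (hleF N y)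
        · set N₀ : ℕ := ⌈dist y c⌉₊ + ⌈|f y|⌉₊ + 1 with hN₀
          refine le_iSup_of_le N₀ ?_
          have hyball : y ∈ ball c (N₀ : ℝ) := by
            rw [mem_ball]
            have h1 := Nat.le_ceil (dist y c)
            have h2 : (0:ℝ) ≤ (⌈|f y|⌉₊ : ℝ) := Nat.cast_nonneg _
            rw [hN₀]; push_cast
            linarith
          have hmin : min |f y| (N₀ : ℝ) = |f y| := by
            apply min_eq_left
            have h1 := Nat.le_ceil |f y|
            have h2 : (0:ℝ) ≤ (⌈dist y c⌉₊ : ℝ) := Nat.cast_nonneg _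
            rw [hN₀]; push_cast
            linarith
          have hmem : y ∈ E ∩ ball c (N₀ : ℝ) := ⟨hy, hyball⟩
          have hEq : hseq N₀ y = |f y| := by
            simp only [hseqdef, Set.indicator_of_mem hmem, hmin]
          rw [hEq]
      rw [← ENNReal.iSup_mul, hsup]
    · rw [Set.indicator_of_notMem hy]
      have h0 : ∀ N : ℕ, hseq N y = 0 := by
        intro N
        rw [hseqdef]
        exact Set.indicator_of_notMem (fun hmem => hy hmem.1) _
      simp [h0]
  calc (∫⁻ y, E.indicator
      (fun y => ENNReal.ofReal |f y| * ENNReal.ofReal (s * Phi n j c r y)) y)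
      = ∫⁻ y, ⨆ N : ℕ, ENNReal.ofReal (hseq N y) * W y := by
        congr 1; funext y; exact hptsup y
    _ = ⨆ N : ℕ, ∫⁻ y, ENNReal.ofReal (hseq N y) * W y :=
        lintegral_iSup (fun N => ((hmeasN N).ennreal_ofReal.mul hWmeas)) hmono
    _ ≤ ENNReal.ofReal c₀ * kdual X (chiE n c r) := iSup_le hkey

set_option maxHeartbeats 2000000 in
lemma core {n : ℕ} (hn : 0 < n) (X : BFL n) (j : Fin n) (T : (Euc n → ℝ) → Euc n → ℝ)
    (hT : IsRieszOn n j X T) {c₀ : ℝ} (hc₀ : 0 < c₀)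
    (hTC : ∀ g, X.N (T g) ≤ ENNReal.ofReal c₀ * X.N g)
    {a : ℝ} (ha : 2 ≤ a) (c : Euc n) {r : ℝ} (hr : 0 < r)
    (f : Euc n → ℝ) (hf : Measurable f) (hXf : X.N f ≤ 1) :
    X.N (chiR n c r) * ∫⁻ y, ENNReal.ofReal |f y| * chiE n c (a * r) y ≤
      ENNReal.ofReal (c₀ ^ 2 * (5 * a) ^ (2 * n + 2) /
        (3 * a ^ (n + 1) * (volume (ball (0 : Euc n) 1)).toReal)) *
        ENNReal.ofReal (r ^ n) := by
  have ha0 : (0:ℝ) < a := lt_of_lt_of_le two_pos ha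
  have har : 0 < a * r := mul_pos ha0 hr
  have hra : r ≤ a * r := by nlinarith
  set ω : ℝ := (volume (ball (0 : Euc n) 1)).toReal with hωdef
  have hωpos : 0 < ω := ENNReal.toReal_pos
    (ne_of_gt (measure_ball_pos volume 0 one_pos)) measure_ball_lt_top.ne
  set e : Euc n := EuclideanSpace.single j 1 with hedef
  set c' : Euc n := c + (3 * (a * r)) • e with hc'def
  have hnorme : ‖e‖ = 1 := by rw [hedef, EuclideanSpace.norm_single, norm_one]
  have hej : e j = 1 := by rw [hedef, EuclideanSpace.single_apply]; simp
  have hcc' : dist c' c = 3 * (a * r) := by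
    rw [hc'def, dist_eq_norm, add_sub_cancel_left, norm_smul, hnorme,
      Real.norm_eq_abs, abs_of_pos (by positivity), mul_one]
  have hc'j : c' j = c j + 3 * (a * r) := by
    rw [hc'def, PiLp.add_apply, PiLp.smul_apply, hej, smul_eq_mul, mul_one]
  -- coordinate bounds
  have hcoord_hi : ∀ z : Euc n, ∀ ρ : ℝ, z ∈ ball c ρ → z j < c j + ρ := by
    intro z ρ hz
    have h1 : |z j - c j| ≤ ‖z - c‖ := abs_coord_sub_le z c j
    have h2 : ‖z - c‖ < ρ := by rw [← dist_eq_norm]; exact mem_ball.mp hz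
    have := abs_lt.mp (lt_of_le_of_lt h1 h2)
    linarith [this.2]
  have hcoord_lo : ∀ z : Euc n, z ∈ ball c' (a * r) → c j + 2 * (a * r) < z j := by
    intro z hz
    have h1 : |z j - c' j| ≤ ‖z - c'‖ := abs_coord_sub_le z c' j
    have h2 : ‖z - c'‖ < a * r := by rw [← dist_eq_norm]; exact mem_ball.mp hz
    have h3 := abs_lt.mp (lt_of_le_of_lt h1 h2)
    rw [hc'j] at h3
    linarith [h3.1]
  -- kernel estimates
  have hKB : ∀ x ∈ ball c' (a * r), ∀ y ∈ ball c (a * r),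
      a * r / (5 * (a * r)) ^ ((n : ℝ) + 1) ≤ K n j x y := by
    intro x hx y hy
    apply K_pos_lower j har
    · have h1 := hcoord_lo x hx
      have h2 := hcoord_hi y _ hy
      linarith
    · have := dist_triangle4 x c' c y
      have hx' : dist x c' < a * r := mem_ball.mp hx
      have hy' : dist c y < a * r := by rw [dist_comm]; exact mem_ball.mp hy
      rw [← dist_eq_norm]
      linarith [hcc']
  have hKA : ∀ x ∈ ball c r, ∀ y ∈ ball c' (a * r),
      K n j x y ≤ -(3 * r / (5 * (a * r)) ^ ((n : ℝ) + 1)) := by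
    intro x hx y hy
    have hK' : 3 * r / (5 * (a * r)) ^ ((n : ℝ) + 1) ≤ K n j y x := by
      apply K_pos_lower j (by positivity)
      · have h1 := hcoord_lo y hy
        have h2 := hcoord_hi x _ hx
        nlinarith
      · have := dist_triangle4 y c' c x
        have hy' : dist y c' < a * r := mem_ball.mp hy
        have hx' : dist c x < r := by rw [dist_comm]; exact mem_ball.mp hx
        rw [← dist_eq_norm]
        have h5 : dist y x ≤ dist y c' + dist c' c + dist c x := this
        have h6 : (0:ℝ) < a * r := har
        rw [hcc'] at h5
        nlinarith
    rw [show K n j x y = - K n j y x from K_swap j y x]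
    linarith
  set ρ : ℝ := (5 * (a * r)) ^ ((n : ℝ) + 1) with hρdef
  have hρpos : 0 < ρ := Real.rpow_pos_of_pos (by positivity) _
  set κB : ℝ := a * r / ρ with hκBdef
  set κA : ℝ := 3 * r / ρ with hκAdef
  have hκBpos : 0 < κB := by positivity
  have hκApos : 0 < κA := by positivity
  have hvolB' : (volume (ball c' (a * r))).toReal = (a * r) ^ n * ω :=
    vol_ball_toReal hn c' har.le
  set κ₃ : ℝ := κA * ((a * r) ^ n * ω) with hκ₃def
  have hκ₃pos : 0 < κ₃ := by positivity
  -- χ' = indicator of the shifted ball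
  set chi' : Euc n → ℝ := chiR n c' (a * r) with hchi'def
  have hchi'meas : Measurable chi' := measurable_chiR c' (a * r)
  have hchi'supp : tsupport chi' ⊆ closedBall c' (a * r) := by
    apply closure_minimal _ Metric.isClosed_closedBall
    intro z hz
    by_contra hmem
    exact hz (chiR_of_not_mem fun hb => hmem (ball_subset_closedBall hb))
  have hchi'cs : HasCompactSupport chi' :=
    IsCompact.of_isClosed_subset (isCompact_closedBall c' (a * r))
      isClosed_closure hchi'supp
  have hchi'bd : ∀ z, |chi' z| ≤ 1 := fun z => by
    rw [hchi'def, abs_of_nonneg (chiR_nonneg _ _ _)]; exact chiR_le_one _ _ _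
  -- Step A : pointwise lower bound for |T chi'| on ball c r
  have hrep' : ∀ x ∈ ball c r, T chi' x = ∫ y, K n j x y * chi' y := by
    intro x hx
    have hx' : x ∉ tsupport chi' := by
      intro hmem
      have h1 : dist x c' ≤ a * r := mem_closedBall.mp (hchi'supp hmem)
      have h2 : dist x c < r := mem_ball.mp hx
      have h3 : dist c' c ≤ dist c' x + dist x c := dist_triangle c' x c
      rw [hcc', dist_comm c' x] at h3
      nlinarith
    exact hT.2 chi' hchi'meas ⟨1, hchi'bd⟩ hchi'cs x hx'
  have hTneg : ∀ x ∈ ball c r, T chi' x ≤ -κ₃ := by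
    intro x hx
    rw [hrep' x hx]
    have hKbd : ∀ y, ‖K n j x y * chi' y‖ ≤
        (closedBall c' (a * r)).indicator (fun _ => 5 * (a * r) / r ^ ((n : ℝ) + 1)) y := by
      intro y
      by_cases hy : y ∈ ball c' (a * r)
      · have hL : r ≤ ‖x - y‖ := by
          rw [← dist_eq_norm]
          have h3 : dist c' c ≤ dist c' y + dist y x + dist x c :=
            dist_triangle4 c' y x c
          rw [hcc'] at h3
          have h4 : dist c' y < a * r := by rw [dist_comm]; exact mem_ball.mp hy
          have h5 : dist x c < r := mem_ball.mp hx
          have h6 : dist y x = dist x y := dist_comm y x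
          nlinarith
        have hU : ‖x - y‖ ≤ 5 * (a * r) := by
          rw [← dist_eq_norm]
          have := dist_triangle4 x c c' y
          have h4 : dist c c' = 3 * (a * r) := by rw [dist_comm]; exact hcc'
          have h5 : dist c' y < a * r := by rw [dist_comm]; exact mem_ball.mp hy
          have h6 : dist x c < r := mem_ball.mp hx
          nlinarith
        rw [Set.indicator_of_mem (ball_subset_closedBall hy), Real.norm_eq_abs,
          abs_mul]
        have h7 : |chi' y| ≤ 1 := hchi'bd y
        calc |K n j x y| * |chi' y| ≤ (5 * (a * r) / r ^ ((n : ℝ) + 1)) * 1 :=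
            mul_le_mul (abs_K_le j hr hL hU) h7 (abs_nonneg _) (by positivity)
          _ = 5 * (a * r) / r ^ ((n : ℝ) + 1) := mul_one _
      · rw [hchi'def, chiR_of_not_mem hy]
        simp only [mul_zero, norm_zero]
        exact Set.indicator_nonneg (fun _ _ => by positivity) y
    have hint1 : Integrable (fun y => K n j x y * chi' y) := by
      apply Integrable.mono' (g := (closedBall c' (a * r)).indicator
        (fun _ => 5 * (a * r) / r ^ ((n : ℝ) + 1)))
      · rw [integrable_indicator_iff measurableSet_closedBall]
        exact (integrableOn_const_iff (by finiteness)).mpr (Or.inr measure_closedBall_lt_top)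
      · exact ((measurable_K j).comp (measurable_prodMk_left)).mul
          ((measurable_chiR c' (a*r))) |>.aestronglyMeasurable
      · exact ae_of_all _ hKbd
    have hint2 : Integrable (fun y => -κA * chi' y) := by
      apply Integrable.const_mul
      rw [hchi'def, chiR]
      rw [integrable_indicator_iff measurableSet_ball]
      exact (integrableOn_const_iff (by finiteness)).mpr (Or.inr measure_ball_lt_top)
    have hmono : ∀ y, K n j x y * chi' y ≤ -κA * chi' y := by
      intro y
      by_cases hy : y ∈ ball c' (a * r)
      · have h8 := hKA x hx y hy
        have h9 : chi' y = 1 := chiR_of_mem hy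
        rw [h9, mul_one, mul_one]
        exact h8
      · have h9 : chi' y = 0 := chiR_of_not_mem hy
        rw [h9, mul_zero, mul_zero]
    calc (∫ y, K n j x y * chi' y) ≤ ∫ y, -κA * chi' y :=
        integral_mono hint1 hint2 hmono
      _ = -κA * ∫ y, chi' y := integral_const_mul _ _
      _ = -κA * ((a * r) ^ n * ω) := by
          rw [hchi'def, chiR, integral_indicator_const _ measurableSet_ball]
          rw [smul_eq_mul, mul_one, ← hvolB']; rfl
      _ = -κ₃ := by rw [hκ₃def]; ring
  have hA : ENNReal.ofReal κ₃ * X.N (chiR n c r) ≤ ENNReal.ofReal c₀ * X.N chi' := by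
    have hptw : ∀ z, |κ₃ * chiR n c r z| ≤ |T chi' z| := by
      intro z
      by_cases hz : z ∈ ball c r
      · rw [chiR_of_mem hz, mul_one, abs_of_pos hκ₃pos]
        have := hTneg z hz
        calc κ₃ ≤ -(T chi' z) := by linarith
          _ ≤ |T chi' z| := neg_le_abs _
      · rw [chiR_of_not_mem hz, mul_zero, abs_zero]
        exact abs_nonneg _
    calc ENNReal.ofReal κ₃ * X.N (chiR n c r)
        = ENNReal.ofReal |κ₃| * X.N (chiR n c r) := by rw [abs_of_pos hκ₃pos]
      _ = X.N (fun z => κ₃ * chiR n c r z) := (X.smul κ₃ (chiR n c r)).symm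
      _ ≤ X.N (T chi') := X.mono (T chi') _ hptw
      _ ≤ ENNReal.ofReal c₀ * X.N chi' := hTC chi'
  -- truncations
  set hseq : ℕ → Euc n → ℝ :=
    fun N y => (ball c (a * r)).indicator (fun y => min |f y| N) y with hseqdef
  have hmeasN : ∀ N, Measurable (hseq N) := fun N =>
    (hf.abs.min measurable_const).indicator measurableSet_ball
  have hnnN : ∀ N y, 0 ≤ hseq N y := fun N y =>
    Set.indicator_nonneg (fun z _ => le_min (abs_nonneg _) (Nat.cast_nonneg N)) y
  have hleF : ∀ N y, hseq N y ≤ |f y| := by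
    intro N y
    by_cases hy : y ∈ ball c (a * r)
    · rw [hseqdef]; simp only [Set.indicator_of_mem hy]; exact min_le_left _ _
    · rw [hseqdef]; simp only [Set.indicator_of_notMem hy]; exact abs_nonneg _
  have hXN : ∀ N, X.N (hseq N) ≤ 1 := by
    intro N
    refine le_trans (X.mono f (hseq N) fun y => ?_) hXf
    rw [abs_of_nonneg (hnnN N y)]; exact hleF N y
  have hbdN : ∀ N y, |hseq N y| ≤ (N : ℝ) := by
    intro N y
    rw [abs_of_nonneg (hnnN N y)]
    by_cases hy : y ∈ ball c (a * r)
    · rw [hseqdef]; simp only [Set.indicator_of_mem hy]; exact min_le_right _ _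
    · rw [hseqdef]; simp only [Set.indicator_of_notMem hy]; exact Nat.cast_nonneg N
  have hsuppN : ∀ N, tsupport (hseq N) ⊆ closedBall c (a * r) := by
    intro N
    apply closure_minimal _ Metric.isClosed_closedBall
    intro z hz
    by_contra hmem
    apply hz
    rw [hseqdef]
    exact Set.indicator_of_notMem (fun hb => hmem (ball_subset_closedBall hb)) _
  have hcsN : ∀ N, HasCompactSupport (hseq N) := fun N =>
    IsCompact.of_isClosed_subset (isCompact_closedBall c (a * r))
      isClosed_closure (hsuppN N)
  have hintN : ∀ N, Integrable (hseq N) := by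
    intro N
    apply Integrable.mono' (g := (closedBall c (a * r)).indicator fun _ => (N : ℝ))
    · rw [integrable_indicator_iff measurableSet_closedBall]
      exact (integrableOn_const_iff (by finiteness)).mpr (Or.inr measure_closedBall_lt_top)
    · exact (hmeasN N).aestronglyMeasurable
    · refine ae_of_all _ fun y => ?_
      by_cases hy : y ∈ ball c (a * r)
      · rw [Set.indicator_of_mem (ball_subset_closedBall hy), Real.norm_eq_abs]
        exact hbdN N y
      · have h0 : hseq N y = 0 := by
          rw [hseqdef]; exact Set.indicator_of_notMem hy _
        rw [h0]
        simp only [norm_zero]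
        exact Set.indicator_nonneg (fun _ _ => Nat.cast_nonneg N) y
  -- Step B : for each N
  have hB : ∀ N : ℕ, ENNReal.ofReal (κB * ∫ y, hseq N y) * X.N chi' ≤
      ENNReal.ofReal c₀ := by
    intro N
    set I : ℝ := ∫ y, hseq N y with hIdef
    have hI0 : 0 ≤ I := integral_nonneg (hnnN N)
    have hrepB : ∀ x ∈ ball c' (a * r), T (hseq N) x = ∫ y, K n j x y * hseq N y := by
      intro x hx
      have hx' : x ∉ tsupport (hseq N) := by
        intro hmem
        have h1 : dist x c ≤ a * r := mem_closedBall.mp (hsuppN N hmem)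
        have h2 : dist x c' < a * r := mem_ball.mp hx
        have h3 : dist c' c ≤ dist c' x + dist x c := dist_triangle c' x c
        rw [hcc', dist_comm c' x] at h3
        nlinarith
      exact hT.2 (hseq N) (hmeasN N) ⟨N, hbdN N⟩ (hcsN N) x hx'
    have hulow : ∀ x ∈ ball c' (a * r), κB * I ≤ ∫ y, K n j x y * hseq N y := by
      intro x hx
      have hint1 : Integrable (fun y => K n j x y * hseq N y) := by
        apply Integrable.mono' (g := (closedBall c (a * r)).indicator
          (fun _ => 5 * (a * r) / (a * r) ^ ((n : ℝ) + 1) * N))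
        · rw [integrable_indicator_iff measurableSet_closedBall]
          exact (integrableOn_const_iff (by finiteness)).mpr (Or.inr measure_closedBall_lt_top)
        · exact (((measurable_K j).comp measurable_prodMk_left).mul
            (hmeasN N)).aestronglyMeasurable
        · refine ae_of_all _ fun y => ?_
          by_cases hy : y ∈ ball c (a * r)
          · have hL : a * r ≤ ‖x - y‖ := by
              rw [← dist_eq_norm]
              have h3 : dist c' c ≤ dist c' x + dist x y + dist y c :=
                dist_triangle4 c' x y c
              rw [hcc', dist_comm c' x] at h3
              have h4 : dist x c' < a * r := mem_ball.mp hx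
              have h5 : dist y c < a * r := mem_ball.mp hy
              nlinarith
            have hU : ‖x - y‖ ≤ 5 * (a * r) := by
              rw [← dist_eq_norm]
              have := dist_triangle4 x c' c y
              have h4 : dist x c' < a * r := mem_ball.mp hx
              have h5 : dist c y < a * r := by rw [dist_comm]; exact mem_ball.mp hy
              rw [hcc'] at this
              nlinarith
            rw [Set.indicator_of_mem (ball_subset_closedBall hy), Real.norm_eq_abs,
              abs_mul]
            exact mul_le_mul (abs_K_le j har hL hU) (hbdN N y) (abs_nonneg _)
              (by positivity)
          · have h0 : hseq N y = 0 := by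
              rw [hseqdef]; exact Set.indicator_of_notMem hy _
            rw [h0]
            simp only [mul_zero, norm_zero]
            refine Set.indicator_nonneg (fun z _ => ?_) y
            have h9 : (0:ℝ) < (a * r) ^ ((n : ℝ) + 1) := Real.rpow_pos_of_pos har _
            positivity
      have hint2 : Integrable (fun y => κB * hseq N y) := (hintN N).const_mul κB
      have hmono : ∀ y, κB * hseq N y ≤ K n j x y * hseq N y := by
        intro y
        by_cases hy : y ∈ ball c (a * r)
        · exact mul_le_mul_of_nonneg_right (hKB x hx y hy) (hnnN N y)
        · have h0 : hseq N y = 0 := by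
            rw [hseqdef]; exact Set.indicator_of_notMem hy _
          rw [h0, mul_zero, mul_zero]
      calc κB * I = ∫ y, κB * hseq N y := (integral_const_mul _ _).symm
        _ ≤ ∫ y, K n j x y * hseq N y := integral_mono hint2 hint1 hmono
    have hptw : ∀ z, |κB * I * chi' z| ≤ |T (hseq N) z| := by
      intro z
      by_cases hz : z ∈ ball c' (a * r)
      · rw [hchi'def, chiR_of_mem hz, mul_one, abs_of_nonneg (by positivity)]
        calc κB * I ≤ ∫ y, K n j z y * hseq N y := hulow z hz
          _ = T (hseq N) z := (hrepB z hz).symm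
          _ ≤ |T (hseq N) z| := le_abs_self _
      · rw [hchi'def, chiR_of_not_mem hz, mul_zero, abs_zero]
        exact abs_nonneg _
    calc ENNReal.ofReal (κB * I) * X.N chi'
        = ENNReal.ofReal |κB * I| * X.N chi' := by
          rw [abs_of_nonneg (by positivity)]
      _ = X.N (fun z => κB * I * chi' z) := (X.smul _ chi').symm
      _ ≤ X.N (T (hseq N)) := X.mono _ _ hptw
      _ ≤ ENNReal.ofReal c₀ * X.N (hseq N) := hTC _
      _ ≤ ENNReal.ofReal c₀ * 1 := mul_le_mul_right (hXN N) _
      _ = ENNReal.ofReal c₀ := mul_one _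
  -- combine A and B
  have hAB : ∀ N : ℕ, X.N (chiR n c r) * ENNReal.ofReal (∫ y, hseq N y) ≤
      ENNReal.ofReal (c₀ ^ 2 * (5 * a) ^ (2 * n + 2) /
        (3 * a ^ (n + 1) * ω)) * ENNReal.ofReal (r ^ n) := by
    intro N
    set I : ℝ := ∫ y, hseq N y with hIdef
    have hI0 : 0 ≤ I := integral_nonneg (hnnN N)
    have h1 : ENNReal.ofReal (κ₃ * κB) * (X.N (chiR n c r) * ENNReal.ofReal I) ≤
        ENNReal.ofReal (c₀ ^ 2) := by
      have e1 : ENNReal.ofReal (κ₃ * κB) * (X.N (chiR n c r) * ENNReal.ofReal I) =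
          (ENNReal.ofReal κ₃ * X.N (chiR n c r)) *
            (ENNReal.ofReal κB * ENNReal.ofReal I) := by
        rw [ENNReal.ofReal_mul hκ₃pos.le]; ring
      rw [e1]
      calc (ENNReal.ofReal κ₃ * X.N (chiR n c r)) *
            (ENNReal.ofReal κB * ENNReal.ofReal I)
          ≤ (ENNReal.ofReal c₀ * X.N chi') * (ENNReal.ofReal κB * ENNReal.ofReal I) :=
            mul_le_mul_left hA _
        _ = ENNReal.ofReal c₀ * (ENNReal.ofReal (κB * I) * X.N chi') := by
            rw [ENNReal.ofReal_mul hκBpos.le]; ring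
        _ ≤ ENNReal.ofReal c₀ * ENNReal.ofReal c₀ := mul_le_mul_right (hB N) _
        _ = ENNReal.ofReal (c₀ ^ 2) := by
            rw [← ENNReal.ofReal_mul hc₀.le]; ring_nf
    have hγpos : 0 < κ₃ * κB := mul_pos hκ₃pos hκBpos
    have h2 : X.N (chiR n c r) * ENNReal.ofReal I ≤
        (ENNReal.ofReal (κ₃ * κB))⁻¹ * ENNReal.ofReal (c₀ ^ 2) := by
      rw [← ENNReal.mul_le_iff_le_inv (ne_of_gt (ENNReal.ofReal_pos.mpr hγpos))
        ENNReal.ofReal_ne_top]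
      exact h1
    refine le_trans h2 ?_
    have hρnat : ρ = (5 * (a * r)) ^ (n + 1 : ℕ) := by
      rw [hρdef, ← Real.rpow_natCast (5 * (a * r)) (n + 1)]
      congr 1
      push_cast
      ring
    have hreal : (κ₃ * κB)⁻¹ * c₀ ^ 2 =
        c₀ ^ 2 * (5 * a) ^ (2 * n + 2) / (3 * a ^ (n + 1) * ω) * r ^ n := by
      rw [hκ₃def, hκBdef, hκAdef, hρnat]
      rw [mul_pow (5 : ℝ) (a * r) (n + 1), mul_pow a r (n + 1), mul_pow a r n]
      field_simp
      ring
    rw [← ENNReal.ofReal_inv_of_pos hγpos, ← ENNReal.ofReal_mul (by positivity),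
      hreal, ENNReal.ofReal_mul (by positivity)]
  -- monotone convergence
  have hptsup : ∀ y, ENNReal.ofReal |f y| * chiE n c (a * r) y =
      ⨆ N : ℕ, ENNReal.ofReal (hseq N y) := by
    intro y
    by_cases hy : y ∈ ball c (a * r)
    · rw [chiE, Set.indicator_of_mem hy, mul_one]
      apply le_antisymm
      · set N₀ : ℕ := ⌈|f y|⌉₊ + 1 with hN₀
        refine le_iSup_of_le N₀ ?_
        have hmin : min |f y| (N₀ : ℝ) = |f y| := by
          apply min_eq_left
          have h1 := Nat.le_ceil |f y|
          rw [hN₀]; push_cast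
          linarith
        have hEq : hseq N₀ y = |f y| := by
          simp only [hseqdef, Set.indicator_of_mem hy, hmin]
        rw [hEq]
      · exact iSup_le fun N => ENNReal.ofReal_le_ofReal (hleF N y)
    · rw [chiE, Set.indicator_of_notMem hy, mul_zero]
      have h0 : ∀ N : ℕ, hseq N y = 0 := fun N => by
        rw [hseqdef]; exact Set.indicator_of_notMem hy _
      simp [h0]
  have hmono : Monotone fun N : ℕ => fun y => ENNReal.ofReal (hseq N y) := by
    intro N M hNM y
    apply ENNReal.ofReal_le_ofReal
    by_cases hy : y ∈ ball c (a * r)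
    · rw [hseqdef]
      simp only [Set.indicator_of_mem hy]
      exact min_le_min le_rfl (by exact_mod_cast hNM)
    · rw [hseqdef]
      simp only [Set.indicator_of_notMem hy]
      exact le_rfl
  calc X.N (chiR n c r) * ∫⁻ y, ENNReal.ofReal |f y| * chiE n c (a * r) y
      = X.N (chiR n c r) * ∫⁻ y, ⨆ N : ℕ, ENNReal.ofReal (hseq N y) := by
        congr 1; congr 1; funext y; exact hptsup y
    _ = X.N (chiR n c r) * ⨆ N : ℕ, ∫⁻ y, ENNReal.ofReal (hseq N y) := by
        rw [lintegral_iSup (fun N => (hmeasN N).ennreal_ofReal) hmono]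
    _ = ⨆ N : ℕ, X.N (chiR n c r) * ∫⁻ y, ENNReal.ofReal (hseq N y) := by
        rw [ENNReal.mul_iSup]
    _ ≤ ENNReal.ofReal (c₀ ^ 2 * (5 * a) ^ (2 * n + 2) /
        (3 * a ^ (n + 1) * ω)) * ENNReal.ofReal (r ^ n) := by
        apply iSup_le
        intro N
        have hEqI : (∫⁻ y, ENNReal.ofReal (hseq N y)) =
            ENNReal.ofReal (∫ y, hseq N y) :=
          (ofReal_integral_eq_lintegral_ofReal (hintN N) (ae_of_all _ (hnnN N))).symm
        rw [hEqI]
        exact hAB N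

lemma setLIntegral_chiE {n : ℕ} (c : Euc n) (r : ℝ) (s : Set (Euc n))
    (hs : MeasurableSet s) :
    ∫⁻ x in s, chiE n c r x = volume (ball c r ∩ s) := by
  rw [chiE]
  rw [lintegral_indicator measurableSet_ball]
  rw [Measure.restrict_restrict measurableSet_ball]
  exact setLIntegral_one _

lemma hlMax_le_one {n : ℕ} (c : Euc n) (r : ℝ) (y : Euc n) :
    hlMax n (chiE n c r) y ≤ 1 := by
  rw [hlMax]
  refine iSup_le fun z => iSup_le fun t => iSup_le fun ht => ?_
  have h1 : (∫⁻ x in ball z t, chiE n c r x) ≤ volume (ball z t) := by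
    rw [setLIntegral_chiE c r _ measurableSet_ball]
    exact measure_mono Set.inter_subset_right
  calc (volume (ball z t))⁻¹ * ∫⁻ x in ball z t, chiE n c r x
      ≤ (volume (ball z t))⁻¹ * volume (ball z t) := mul_le_mul_right h1 _
    _ ≤ 1 := by exact ENNReal.inv_mul_le_one _

lemma hlMax_far {n : ℕ} (hn : 0 < n) (c : Euc n) {r : ℝ} (hr : 0 < r) {a : ℝ}
    (ha : 2 ≤ a) {y : Euc n} (hd : a * r ≤ dist y c) :
    hlMax n (chiE n c r) y ≤
      ENNReal.ofReal (4 ^ n * r ^ n / dist y c ^ n) := by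
  have ha0 : (0:ℝ) < a := lt_of_lt_of_le two_pos ha
  set d : ℝ := dist y c with hddef
  have hd0 : 0 < d := lt_of_lt_of_le (by positivity) hd
  have h2r : 2 * r ≤ d := by nlinarith
  rw [hlMax]
  refine iSup_le fun z => iSup_le fun t => iSup_le fun ht => ?_
  obtain ⟨ht0, hyt⟩ := ht
  rw [setLIntegral_chiE c r _ measurableSet_ball]
  rcases Set.eq_empty_or_nonempty (ball c r ∩ ball z t) with hemp | ⟨b, hb⟩
  · rw [hemp]
    simp
  · have hbt : dist b z < t := mem_ball.mp hb.2
    have hbc : dist b c < r := mem_ball.mp hb.1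
    have hyz : dist y z < t := mem_ball.mp hyt
    have htd : d / 4 < t := by
      have h3 : d ≤ dist y z + dist z b + dist b c := dist_triangle4 y z b c
      have h4 : dist z b = dist b z := dist_comm z b
      nlinarith
    have hι0 : volume (ball (0 : Euc n) 1) ≠ 0 :=
      (measure_ball_pos volume 0 one_pos).ne'
    have hιtop : volume (ball (0 : Euc n) 1) ≠ ⊤ := measure_ball_lt_top.ne
    calc (volume (ball z t))⁻¹ * volume (ball c r ∩ ball z t)
        ≤ (volume (ball z t))⁻¹ * volume (ball c r) :=
          mul_le_mul_right (measure_mono Set.inter_subset_left) _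
      _ = (ENNReal.ofReal (t ^ n) * volume (ball (0:Euc n) 1))⁻¹ *
          (ENNReal.ofReal (r ^ n) * volume (ball (0:Euc n) 1)) := by
          rw [vol_ball hn z ht0.le, vol_ball hn c hr.le]
      _ = (ENNReal.ofReal (t ^ n))⁻¹ * ENNReal.ofReal (r ^ n) *
          ((volume (ball (0:Euc n) 1))⁻¹ * volume (ball (0:Euc n) 1)) := by
          rw [ENNReal.mul_inv (Or.inl (by
            simp only [ne_eq, ENNReal.ofReal_eq_zero, not_le]; positivity))
            (Or.inl ENNReal.ofReal_ne_top)]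
          ring
      _ = (ENNReal.ofReal (t ^ n))⁻¹ * ENNReal.ofReal (r ^ n) := by
          rw [ENNReal.inv_mul_cancel hι0 hιtop, mul_one]
      _ ≤ (ENNReal.ofReal ((d / 4) ^ n))⁻¹ * ENNReal.ofReal (r ^ n) := by
          apply mul_le_mul_left
          apply ENNReal.inv_le_inv.mpr
          apply ENNReal.ofReal_le_ofReal
          exact pow_le_pow_left₀ (by positivity) htd.le n
      _ = ENNReal.ofReal (4 ^ n * r ^ n / d ^ n) := by
          rw [← ENNReal.ofReal_inv_of_pos (by positivity),
            ← ENNReal.ofReal_mul (by positivity)]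
          congr 1
          rw [div_pow]
          field_simp

lemma exists_coord {n : ℕ} (hn : 0 < n) (c y : Euc n) (hd : 0 < dist y c) :
    ∃ (j : Fin n) (s : ℝ), (s = 1 ∨ s = -1) ∧
      dist y c / n ≤ s * (y j - c j) := by
  have hj : ∃ j : Fin n, dist y c / n ≤ |y j - c j| := by
    by_contra hcon
    push_neg at hcon
    have hne : (Finset.univ : Finset (Fin n)).Nonempty :=
      ⟨⟨0, hn⟩, Finset.mem_univ _⟩
    have hsum : ∑ i, ‖(y - c) i‖ ^ 2 < ∑ _i : Fin n, (dist y c / n) ^ 2 := by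
      apply Finset.sum_lt_sum_of_nonempty hne
      intro i _
      have h1 : |y i - c i| < dist y c / n := hcon i
      have h2 : ‖(y - c) i‖ = |y i - c i| := by
        rw [PiLp.sub_apply, Real.norm_eq_abs]
      rw [h2]
      exact pow_lt_pow_left₀ h1 (abs_nonneg _) two_ne_zero
    have hsum2 : ∑ _i : Fin n, (dist y c / n) ^ 2 = (dist y c) ^ 2 / n := by
      rw [Finset.sum_const, Finset.card_univ, Fintype.card_fin, nsmul_eq_mul]
      rw [div_pow]
      field_simp
    have hnorm : ‖y - c‖ ^ 2 = ∑ i, ‖(y - c) i‖ ^ 2 := by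
      rw [EuclideanSpace.norm_eq]
      rw [Real.sq_sqrt (Finset.sum_nonneg fun i _ => sq_nonneg _)]
    have hdist : dist y c = ‖y - c‖ := dist_eq_norm y c
    have hfrac : (dist y c) ^ 2 / n ≤ (dist y c) ^ 2 := by
      apply div_le_self (sq_nonneg _)
      exact_mod_cast hn
    rw [hdist] at hsum2 hfrac hsum
    linarith
  obtain ⟨j, hj⟩ := hj
  by_cases hsgn : 0 ≤ y j - c j
  · exact ⟨j, 1, Or.inl rfl, by rw [one_mul]; rwa [abs_of_nonneg hsgn] at hj⟩
  · refine ⟨j, -1, Or.inr rfl, ?_⟩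
    push_neg at hsgn
    rw [abs_of_neg hsgn] at hj
    linarith [hj]

lemma Phi_far_lower {n : ℕ} (hn : 0 < n) (j : Fin n) (c : Euc n) {r : ℝ}
    (hr : 0 < r) {s : ℝ} (hs : s = 1 ∨ s = -1) {y : Euc n}
    (hd : 2 * n * r ≤ dist y c) (hcoord : dist y c / n ≤ s * (y j - c j)) :
    dist y c / (2 * n) / (3 / 2 * dist y c) ^ ((n : ℝ) + 1) *
      (r ^ n * (volume (ball (0 : Euc n) 1)).toReal) ≤ s * Phi n j c r y := by
  have hn1 : (1:ℝ) ≤ n := by exact_mod_cast hn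
  set d : ℝ := dist y c with hddef
  have hd0 : 0 < d := lt_of_lt_of_le (by positivity) hd
  have hrd : r ≤ d / (2 * n) := by
    rw [le_div_iff₀ (by positivity)]
    nlinarith
  set β : ℝ := d / (2 * n) / (3 / 2 * d) ^ ((n : ℝ) + 1) with hβdef
  have hβ0 : 0 < β := by
    apply div_pos (by positivity) (Real.rpow_pos_of_pos (by positivity) _)
  have habs_s : |s| = 1 := by rcases hs with h | h <;> simp [h]
  -- pointwise kernel bound on the ball
  have hker : ∀ x ∈ ball c r, β ≤ s * K n j y x := by
    intro x hx
    have hxc : |x j - c j| ≤ ‖x - c‖ := abs_coord_sub_le x c j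
    have hxc2 : ‖x - c‖ < r := by rw [← dist_eq_norm]; exact mem_ball.mp hx
    have hkey : d / (2 * n) ≤ s * (y j - x j) := by
      have h1 : s * (y j - x j) = s * (y j - c j) - s * (x j - c j) := by ring
      have h2 : s * (x j - c j) ≤ |x j - c j| := by
        calc s * (x j - c j) ≤ |s * (x j - c j)| := le_abs_self _
          _ = |x j - c j| := by rw [abs_mul, habs_s, one_mul]
      have h3 : d / n - r ≤ s * (y j - x j) := by
        rw [h1]
        have := hcoord
        nlinarith
      have h4 : d / n - d / (2 * n) = d / (2 * n) := by
        field_simp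
        ring
      nlinarith [hrd]
    have hU : ‖y - x‖ ≤ 3 / 2 * d := by
      rw [← dist_eq_norm]
      have h5 : dist y x ≤ dist y c + dist c x := dist_triangle y c x
      have h6 : dist c x < r := by rw [dist_comm]; exact mem_ball.mp hx
      have h7 : r ≤ d / 2 := by
        calc r ≤ d / (2 * n) := hrd
          _ ≤ d / 2 := by
            apply div_le_div_of_nonneg_left hd0.le two_pos
            nlinarith
      nlinarith
    rcases hs with h | h
    · rw [h, one_mul]
      rw [h, one_mul] at hkey
      exact le_trans (le_of_eq (by rw [hβdef])) (K_pos_lower j (by positivity) hkey hU)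
    · rw [h]
      rw [h] at hkey
      have hkey2 : d / (2 * n) ≤ x j - y j := by nlinarith [hkey]
      have hU2 : ‖x - y‖ ≤ 3 / 2 * d := by rwa [norm_sub_rev]
      have := K_pos_lower j (show (0:ℝ) < d / (2*n) by positivity) hkey2 hU2
      rw [show K n j x y = - K n j y x from K_swap j y x] at this
      rw [hβdef]
      linarith
  -- integrate
  have hint2 : Integrable (fun x => s * (K n j y x * chiR n c r x)) := by
    apply Integrable.const_mul
    apply Integrable.mono' (g := (closedBall c r).indicator
      (fun _ => (3 / 2 * d) / r ^ ((n : ℝ) + 1)))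
    · rw [integrable_indicator_iff measurableSet_closedBall]
      exact (integrableOn_const_iff (by finiteness)).mpr (Or.inr measure_closedBall_lt_top)
    · exact (((measurable_K j).comp measurable_prodMk_left).mul
        (measurable_chiR c r)).aestronglyMeasurable
    · refine ae_of_all _ fun x => ?_
      by_cases hx : x ∈ ball c r
      · have hxc2 : dist c x < r := by rw [dist_comm]; exact mem_ball.mp hx
        have hL : r ≤ ‖y - x‖ := by
          rw [← dist_eq_norm]
          have h5 : d ≤ dist y x + dist x c := dist_triangle y x c
          have h6 : dist x c < r := mem_ball.mp hx
          nlinarith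
        have hU : ‖y - x‖ ≤ 3 / 2 * d := by
          rw [← dist_eq_norm]
          have h5 : dist y x ≤ d + dist c x := dist_triangle y c x
          nlinarith
        rw [Set.indicator_of_mem (ball_subset_closedBall hx), Real.norm_eq_abs,
          abs_mul]
        have h7 : |chiR n c r x| ≤ 1 := by
          rw [abs_of_nonneg (chiR_nonneg c r x)]; exact chiR_le_one c r x
        calc |K n j y x| * |chiR n c r x| ≤ (3 / 2 * d) / r ^ ((n : ℝ) + 1) * 1 :=
            mul_le_mul (abs_K_le j hr hL hU) h7 (abs_nonneg _) (by positivity)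
          _ = (3 / 2 * d) / r ^ ((n : ℝ) + 1) := mul_one _
      · rw [chiR_of_not_mem hx]
        simp only [mul_zero, norm_zero]
        refine Set.indicator_nonneg (fun z _ => by positivity) x
  have hint1 : Integrable (fun x => β * chiR n c r x) := by
    apply Integrable.const_mul
    rw [chiR, integrable_indicator_iff measurableSet_ball]
    exact (integrableOn_const_iff (by finiteness)).mpr (Or.inr measure_ball_lt_top)
  have hmono : ∀ x, β * chiR n c r x ≤ s * (K n j y x * chiR n c r x) := by
    intro x
    by_cases hx : x ∈ ball c r
    · rw [chiR_of_mem hx, mul_one, mul_one]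
      exact hker x hx
    · rw [chiR_of_not_mem hx, mul_zero, mul_zero, mul_zero]
  calc β * (r ^ n * (volume (ball (0 : Euc n) 1)).toReal)
      = β * ∫ x, chiR n c r x := by
        rw [chiR, integral_indicator_const _ measurableSet_ball, smul_eq_mul,
          mul_one, measureReal_def, vol_ball_toReal hn c hr.le]
    _ = ∫ x, β * chiR n c r x := (integral_const_mul _ _).symm
    _ ≤ ∫ x, s * (K n j y x * chiR n c r x) := integral_mono hint1 hint2 hmono
    _ = s * Phi n j c r y := by rw [Phi, ← integral_const_mul]

lemma hlMax_far_Phi {n : ℕ} (hn : 0 < n) (j : Fin n) (c : Euc n) {r : ℝ}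
    (hr : 0 < r) {s : ℝ} (hs : s = 1 ∨ s = -1) {y : Euc n}
    (hd : 2 * n * r ≤ dist y c) (hcoord : dist y c / n ≤ s * (y j - c j)) :
    hlMax n (chiE n c r) y ≤
      ENNReal.ofReal (4 ^ n * (2 * n) * (3 / 2 : ℝ) ^ (n + 1) /
        (volume (ball (0 : Euc n) 1)).toReal) *
        ENNReal.ofReal (s * Phi n j c r y) := by
  have hn1 : (1:ℝ) ≤ n := by exact_mod_cast hn
  set ω : ℝ := (volume (ball (0 : Euc n) 1)).toReal with hωdef
  have hωpos : 0 < ω := ENNReal.toReal_pos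
    (ne_of_gt (measure_ball_pos volume 0 one_pos)) measure_ball_lt_top.ne
  set d : ℝ := dist y c with hddef
  have hd0 : 0 < d := lt_of_lt_of_le (by positivity) hd
  have ha2 : (2:ℝ) ≤ 2 * n := by nlinarith
  have hdar : 2 * n * r ≤ d := hd
  have hM2 := hlMax_far hn c hr ha2 (by rw [← hddef]; exact hdar)
  have hM4 := Phi_far_lower hn j c hr hs hd hcoord
  set κ : ℝ := 4 ^ n * (2 * n) * (3 / 2 : ℝ) ^ (n + 1) / ω with hκdef
  have hκ0 : 0 < κ := by positivity
  refine le_trans hM2 ?_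
  rw [← ENNReal.ofReal_mul hκ0.le]
  apply ENNReal.ofReal_le_ofReal
  have hβval : d / (2 * n) / (3 / 2 * d) ^ ((n : ℝ) + 1) *
      (r ^ n * ω) * κ = 4 ^ n * r ^ n / d ^ n := by
    have hpow : (3 / 2 * d) ^ ((n : ℝ) + 1) = (3 / 2 * d) ^ (n + 1 : ℕ) := by
      rw [← Real.rpow_natCast (3 / 2 * d) (n + 1)]
      congr 1
      push_cast
      ring
    rw [hκdef, hpow, mul_pow (3/2 : ℝ) d (n + 1)]
    have hd1 : d ^ (n + 1) = d ^ n * d := pow_succ d n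
    field_simp
    ring
  calc 4 ^ n * r ^ n / d ^ n
      = d / (2 * n) / (3 / 2 * d) ^ ((n : ℝ) + 1) * (r ^ n * ω) * κ := hβval.symm
    _ ≤ s * Phi n j c r y * κ := by
        apply mul_le_mul_of_nonneg_right _ hκ0.le
        exact hM4
    _ = κ * (s * Phi n j c r y) := mul_comm _ _

end S5

open S5 in
set_option maxHeartbeats 4000000 in
theorem stmt5 (n : ℕ) (hn : 0 < n) (X : BFL n)
    (hXballs : ∀ (c : Euc n) (r : ℝ), 0 < r → 0 < X.N (chiR n c r) ∧ X.N (chiR n c r) < ⊤)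
    (hRiesz : ∀ j : Fin n, ∃ T : (Euc n → ℝ) → Euc n → ℝ, IsRieszOn n j X T) :
    ∃ C : ℝ≥0∞, C < ⊤ ∧ ∀ (c : Euc n) (r : ℝ), 0 < r →
      X.N (chiR n c r) * kdual X (hlMax n (chiE n c r)) ≤ C * volume (ball c r) := by
  classical
  have hn1 : (1:ℝ) ≤ n := by exact_mod_cast hn
  set a : ℝ := 2 * n with hadef
  have ha : 2 ≤ a := by rw [hadef]; nlinarith
  have ha0 : (0:ℝ) < a := by linarith
  choose T hTall using hRiesz
  have hc : ∀ j : Fin n, ∃ c₀ : ℝ, 0 < c₀ ∧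
      ∀ g, X.N (T j g) ≤ ENNReal.ofReal c₀ * X.N g := by
    intro j
    obtain ⟨C, hC, hCb⟩ := (hTall j).1
    refine ⟨C.toReal + 1, by positivity, fun g => ?_⟩
    refine le_trans (hCb g) (mul_le_mul_left ?_ _)
    calc C = ENNReal.ofReal C.toReal := (ENNReal.ofReal_toReal hC.ne).symm
      _ ≤ ENNReal.ofReal (C.toReal + 1) := ENNReal.ofReal_le_ofReal (by linarith)
  choose c₀ hc₀pos hc₀mul using hc
  set j0 : Fin n := ⟨0, hn⟩ with hj0
  set ι : ℝ≥0∞ := volume (ball (0 : Euc n) 1) with hιdef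
  have hι0 : ι ≠ 0 := (measure_ball_pos volume 0 one_pos).ne'
  have hιtop : ι ≠ ⊤ := measure_ball_lt_top.ne
  set ω : ℝ := ι.toReal with hωdef
  have hωpos : 0 < ω := ENNReal.toReal_pos hι0 hιtop
  set κ : ℝ := 4 ^ n * (2 * (n:ℝ)) * (3 / 2 : ℝ) ^ (n + 1) / ω with hκdef
  have hκ0 : 0 < κ := by positivity
  set Ccore : ℝ := c₀ j0 ^ 2 * (5 * a) ^ (2 * n + 2) / (3 * a ^ (n + 1) * ω)
    with hCcoredef
  set S : ℝ≥0∞ := ∑ j : Fin n, (2 : ℝ≥0∞) * ENNReal.ofReal (c₀ j) with hSdef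
  have hSlt : S < ⊤ := by
    rw [hSdef]
    refine ENNReal.sum_lt_top.mpr fun j _ => ?_
    exact ENNReal.mul_lt_top (lt_top_iff_ne_top.mpr (by norm_num))
      ENNReal.ofReal_lt_top
  set Cfin : ℝ≥0∞ := (1 + ENNReal.ofReal κ * S) * ENNReal.ofReal Ccore * ι⁻¹
    with hCfindef
  refine ⟨Cfin, ?_, ?_⟩
  · rw [hCfindef]
    apply ENNReal.mul_lt_top
    apply ENNReal.mul_lt_top
    · exact ENNReal.add_lt_top.mpr
        ⟨ENNReal.one_lt_top, ENNReal.mul_lt_top ENNReal.ofReal_lt_top hSlt⟩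
    · exact ENNReal.ofReal_lt_top
    · exact ENNReal.inv_lt_top.mpr (lt_of_le_of_ne (zero_le) (Ne.symm hι0))
  · intro c r hr
    have hbig : X.N (chiR n c r) * kdual X (chiE n c (a * r)) ≤
        ENNReal.ofReal Ccore * ENNReal.ofReal (r ^ n) := by
      rw [kdual, ENNReal.mul_iSup]
      refine iSup_le fun f => ?_
      rw [ENNReal.mul_iSup]
      refine iSup_le fun hf => ?_
      exact core hn X j0 (T j0) (hTall j0) (hc₀pos j0) (hc₀mul j0) ha c hr f
        hf.1 hf.2
    have hsmall : kdual X (chiE n c r) ≤ kdual X (chiE n c (a * r)) := by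
      apply kdual_mono
      intro x
      rw [chiE, chiE]
      exact Set.indicator_le_indicator_of_subset
        (ball_subset_ball (by nlinarith)) (fun _ => zero_le) x
    have hperf : ∀ f : Euc n → ℝ, Measurable f → X.N f ≤ 1 →
        X.N (chiR n c r) * ∫⁻ y, ENNReal.ofReal |f y| * hlMax n (chiE n c r) y ≤
        (1 + ENNReal.ofReal κ * S) *
          (ENNReal.ofReal Ccore * ENNReal.ofReal (r ^ n)) := by
      intro f hf hXf
      set E : Fin n → ℝ → Set (Euc n) := fun j s =>
        {y | a * r ≤ dist y c ∧ dist y c / n ≤ s * (y j - c j)} with hEdef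
      have hEclosed : ∀ (j : Fin n) (s : ℝ), IsClosed (E j s) := by
        intro j s
        have hEq : E j s = {y : Euc n | a * r ≤ dist y c} ∩
            {y : Euc n | dist y c / n ≤ s * (y j - c j)} := rfl
        rw [hEq]
        apply IsClosed.inter
        · exact isClosed_le continuous_const
            (Continuous.dist continuous_id continuous_const)
        · exact isClosed_le
            ((Continuous.dist continuous_id continuous_const).div_const _)
            (continuous_const.mul ((continuous_coord j).sub continuous_const))
      have hfarE : ∀ (j : Fin n) (s : ℝ), ∀ y ∈ E j s, 2 * r ≤ dist y c := by
        intro j s y hy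
        have h1 : a * r ≤ dist y c := hy.1
        nlinarith
      have hEphi : ∀ (j : Fin n) {s : ℝ}, (s = 1 ∨ s = -1) →
          ∀ y ∈ E j s, 0 ≤ s * Phi n j c r y := by
        intro j s hs y hy
        have h4 := Phi_far_lower hn j c hr hs (by
          have : a * r ≤ dist y c := hy.1
          rw [hadef] at this
          linarith) hy.2
        have hd0 : 0 < dist y c := lt_of_lt_of_le (by positivity) hy.1
        have hβ0 : 0 ≤ dist y c / (2 * n) / (3 / 2 * dist y c) ^ ((n : ℝ) + 1) *
            (r ^ n * (volume (ball (0 : Euc n) 1)).toReal) := by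
          have h9 : (0:ℝ) < (3 / 2 * dist y c) ^ ((n : ℝ) + 1) :=
            Real.rpow_pos_of_pos (by positivity) _
          positivity
        linarith
      have hWmeas : ∀ (j : Fin n) (s : ℝ), Measurable fun y =>
          (E j s).indicator (fun y => ENNReal.ofReal |f y| *
            ENNReal.ofReal (s * Phi n j c r y)) y := by
        intro j s
        exact Measurable.indicator
          ((hf.abs.ennreal_ofReal).mul
            (((measurable_Phi j c r).const_mul s).ennreal_ofReal))
          (hEclosed j s).measurableSet
      have hmaster : ∀ y, ENNReal.ofReal |f y| * hlMax n (chiE n c r) y ≤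
          ENNReal.ofReal |f y| * chiE n c (a * r) y +
          ENNReal.ofReal κ * ∑ j : Fin n,
            ((E j 1).indicator (fun y => ENNReal.ofReal |f y| *
                ENNReal.ofReal (1 * Phi n j c r y)) y +
             (E j (-1)).indicator (fun y => ENNReal.ofReal |f y| *
                ENNReal.ofReal ((-1) * Phi n j c r y)) y) := by
        intro y
        by_cases hy : y ∈ ball c (a * r)
        · refine le_trans ?_ le_self_add
          have hchiE1 : chiE n c (a * r) y = 1 := by
            rw [chiE]; exact Set.indicator_of_mem hy _
          rw [hchiE1, mul_one]
          calc ENNReal.ofReal |f y| * hlMax n (chiE n c r) y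
              ≤ ENNReal.ofReal |f y| * 1 :=
                mul_le_mul_right (hlMax_le_one c r y) _
            _ = ENNReal.ofReal |f y| := mul_one _
        · have hdy : a * r ≤ dist y c := by
            by_contra hlt
            push_neg at hlt
            exact hy (mem_ball.mpr hlt)
          have hd0 : 0 < dist y c := lt_of_lt_of_le (by positivity) hdy
          obtain ⟨j, s, hs, hcoord⟩ := exists_coord hn c y hd0
          have hyE : y ∈ E j s := ⟨hdy, hcoord⟩
          have hM5 := hlMax_far_Phi hn j c hr hs (by
            rw [hadef] at hdy; linarith) hcoord
          have hterm : ENNReal.ofReal |f y| * hlMax n (chiE n c r) y ≤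
              ENNReal.ofReal κ * ((E j s).indicator (fun y =>
                ENNReal.ofReal |f y| * ENNReal.ofReal (s * Phi n j c r y)) y) := by
            rw [Set.indicator_of_mem hyE]
            calc ENNReal.ofReal |f y| * hlMax n (chiE n c r) y
                ≤ ENNReal.ofReal |f y| *
                  (ENNReal.ofReal κ * ENNReal.ofReal (s * Phi n j c r y)) := by
                  apply mul_le_mul_right
                  rw [hκdef, hωdef, hιdef]
                  exact hM5
              _ = ENNReal.ofReal κ * (ENNReal.ofReal |f y| *
                  ENNReal.ofReal (s * Phi n j c r y)) := by ring
          refine le_trans hterm (le_trans ?_ le_add_self)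
          apply mul_le_mul_right
          have hsum_mem : (E j s).indicator (fun y =>
              ENNReal.ofReal |f y| * ENNReal.ofReal (s * Phi n j c r y)) y ≤
              (E j 1).indicator (fun y => ENNReal.ofReal |f y| *
                ENNReal.ofReal (1 * Phi n j c r y)) y +
              (E j (-1)).indicator (fun y => ENNReal.ofReal |f y| *
                ENNReal.ofReal ((-1) * Phi n j c r y)) y := by
            rcases hs with h | h
            · subst h; exact le_self_add
            · subst h; exact le_add_self
          refine le_trans hsum_mem ?_
          exact Finset.single_le_sum (f := fun j => (E j 1).indicator (fun y =>
              ENNReal.ofReal |f y| * ENNReal.ofReal (1 * Phi n j c r y)) y +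
              (E j (-1)).indicator (fun y => ENNReal.ofReal |f y| *
                ENNReal.ofReal ((-1) * Phi n j c r y)) y)
            (fun i _ => zero_le) (Finset.mem_univ j)
      have hmeas1 : Measurable fun y => ENNReal.ofReal |f y| * chiE n c (a * r) y :=
        (hf.abs.ennreal_ofReal).mul (measurable_const.indicator measurableSet_ball)
      have hsplit : (∫⁻ y, ENNReal.ofReal |f y| * hlMax n (chiE n c r) y) ≤
          (∫⁻ y, ENNReal.ofReal |f y| * chiE n c (a * r) y) +
          ENNReal.ofReal κ * ∑ j : Fin n,
            ((∫⁻ y, (E j 1).indicator (fun y => ENNReal.ofReal |f y| *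
                ENNReal.ofReal (1 * Phi n j c r y)) y) +
             (∫⁻ y, (E j (-1)).indicator (fun y => ENNReal.ofReal |f y| *
                ENNReal.ofReal ((-1) * Phi n j c r y)) y)) := by
        refine le_trans (lintegral_mono hmaster) ?_
        rw [lintegral_add_left hmeas1]
        apply add_le_add_right
        rw [lintegral_const_mul' _ _ ENNReal.ofReal_ne_top]
        apply mul_le_mul_right
        rw [lintegral_finset_sum (f := fun j y => (E j 1).indicator (fun y => ENNReal.ofReal |f y| *
            ENNReal.ofReal (1 * Phi n j c r y)) y + (E j (-1)).indicator (fun y =>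
            ENNReal.ofReal |f y| * ENNReal.ofReal ((-1) * Phi n j c r y)) y)
          _ (fun j _ => ((hWmeas j 1).add (hWmeas j (-1))))]
        apply le_of_eq
        refine Finset.sum_congr rfl fun j _ => ?_
        exact lintegral_add_left (hWmeas j 1) _
      have hfarbound : ∀ (j : Fin n) {s : ℝ} (_ : s = 1 ∨ s = -1),
          (∫⁻ y, (E j s).indicator (fun y => ENNReal.ofReal |f y| *
            ENNReal.ofReal (s * Phi n j c r y)) y) ≤
          ENNReal.ofReal (c₀ j) * kdual X (chiE n c r) := by
        intro j s hs
        exact far_piece X j (T j) (hTall j) (hc₀pos j) (hc₀mul j) c hr hs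
          (E j s) (hEclosed j s) (hfarE j s) (hEphi j hs) f hf hXf
      have hsum_le : (∑ j : Fin n,
            ((∫⁻ y, (E j 1).indicator (fun y => ENNReal.ofReal |f y| *
                ENNReal.ofReal (1 * Phi n j c r y)) y) +
             (∫⁻ y, (E j (-1)).indicator (fun y => ENNReal.ofReal |f y| *
                ENNReal.ofReal ((-1) * Phi n j c r y)) y))) ≤
          S * kdual X (chiE n c r) := by
        rw [hSdef, Finset.sum_mul]
        apply Finset.sum_le_sum
        intro j _
        calc (∫⁻ y, (E j 1).indicator (fun y => ENNReal.ofReal |f y| *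
                ENNReal.ofReal (1 * Phi n j c r y)) y) +
             (∫⁻ y, (E j (-1)).indicator (fun y => ENNReal.ofReal |f y| *
                ENNReal.ofReal ((-1) * Phi n j c r y)) y)
            ≤ ENNReal.ofReal (c₀ j) * kdual X (chiE n c r) +
              ENNReal.ofReal (c₀ j) * kdual X (chiE n c r) :=
              add_le_add (hfarbound j (Or.inl rfl)) (hfarbound j (Or.inr rfl))
          _ = 2 * ENNReal.ofReal (c₀ j) * kdual X (chiE n c r) := by ring
      calc X.N (chiR n c r) * ∫⁻ y, ENNReal.ofReal |f y| * hlMax n (chiE n c r) y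
          ≤ X.N (chiR n c r) *
            ((∫⁻ y, ENNReal.ofReal |f y| * chiE n c (a * r) y) +
             ENNReal.ofReal κ * ∑ j : Fin n,
              ((∫⁻ y, (E j 1).indicator (fun y => ENNReal.ofReal |f y| *
                  ENNReal.ofReal (1 * Phi n j c r y)) y) +
               (∫⁻ y, (E j (-1)).indicator (fun y => ENNReal.ofReal |f y| *
                  ENNReal.ofReal ((-1) * Phi n j c r y)) y))) :=
            mul_le_mul_right hsplit _
        _ ≤ X.N (chiR n c r) *
            ((∫⁻ y, ENNReal.ofReal |f y| * chiE n c (a * r) y) +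
             ENNReal.ofReal κ * (S * kdual X (chiE n c r))) := by
            apply mul_le_mul_right
            exact add_le_add_right (mul_le_mul_right hsum_le _) _
        _ = X.N (chiR n c r) * (∫⁻ y, ENNReal.ofReal |f y| * chiE n c (a * r) y) +
            (ENNReal.ofReal κ * S) * (X.N (chiR n c r) * kdual X (chiE n c r)) := by
            ring
        _ ≤ ENNReal.ofReal Ccore * ENNReal.ofReal (r ^ n) +
            (ENNReal.ofReal κ * S) * (X.N (chiR n c r) * kdual X (chiE n c (a * r))) := by
            apply add_le_add
            · exact core hn X j0 (T j0) (hTall j0) (hc₀pos j0) (hc₀mul j0) ha c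
                hr f hf hXf
            · exact mul_le_mul_right (mul_le_mul_right hsmall _) _
        _ ≤ ENNReal.ofReal Ccore * ENNReal.ofReal (r ^ n) +
            (ENNReal.ofReal κ * S) *
              (ENNReal.ofReal Ccore * ENNReal.ofReal (r ^ n)) :=
            add_le_add_right (mul_le_mul_right hbig _) _
        _ = (1 + ENNReal.ofReal κ * S) *
            (ENNReal.ofReal Ccore * ENNReal.ofReal (r ^ n)) := by ring
    have hfinal : X.N (chiR n c r) * kdual X (hlMax n (chiE n c r)) ≤
        (1 + ENNReal.ofReal κ * S) *
          (ENNReal.ofReal Ccore * ENNReal.ofReal (r ^ n)) := by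
      rw [kdual, ENNReal.mul_iSup]
      refine iSup_le fun f => ?_
      rw [ENNReal.mul_iSup]
      refine iSup_le fun hf => hperf f hf.1 hf.2
    refine le_trans hfinal (le_of_eq ?_)
    have hvol : volume (ball c r) = ENNReal.ofReal (r ^ n) * ι :=
      vol_ball hn c hr.le
    rw [hCfindef, hvol]
    calc (1 + ENNReal.ofReal κ * S) *
          (ENNReal.ofReal Ccore * ENNReal.ofReal (r ^ n))
        = (1 + ENNReal.ofReal κ * S) * ENNReal.ofReal Ccore *
            ENNReal.ofReal (r ^ n) * (ι⁻¹ * ι) := by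
          rw [ENNReal.inv_mul_cancel hι0 hιtop, mul_one]
          ring
      _ = (1 + ENNReal.ofReal κ * S) * ENNReal.ofReal Ccore * ι⁻¹ *
          (ENNReal.ofReal (r ^ n) * ι) := by ring
end
end

section
/- Let X be a Banach lattice of measurable functions on ℝ^n and Y a normed function space. Let 0 ≤ α < n. If the fractional maximal operator M_α is bounded from X to Y, then sup over all balls B of ‖χ_B‖_Y ‖χ_B‖_{X'} / |B|^{1−α/n} < ∞. -/
open MeasureTheory Metric Set ENNReal

noncomputable section

/-- A normed space of (nonnegative extended-real valued) measurable functions,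
modeled through its norm functional. -/
structure NFS (n : ℕ) where
  N : (Euc n → ℝ≥0∞) → ℝ≥0∞
  mono : ∀ g h : Euc n → ℝ≥0∞, (∀ x, g x ≤ h x) → N g ≤ N h
  smul : ∀ (a : ℝ≥0∞) (g : Euc n → ℝ≥0∞), N (fun x => a * g x) = a * N g

/-- The fractional maximal operator `M_α`. -/
def fracMax (n : ℕ) (α : ℝ) (g : Euc n → ℝ≥0∞) (x : Euc n) : ℝ≥0∞ :=
  ⨆ (c : Euc n) (r : ℝ) (_ : 0 < r ∧ x ∈ ball c r),
    (volume (ball c r)) ^ (α / (n : ℝ) - 1) * ∫⁻ y in ball c r, g y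

/-- The fractional integral (Riesz potential) `I_α`. -/
def fracInt (n : ℕ) (α : ℝ) (g : Euc n → ℝ≥0∞) (x : Euc n) : ℝ≥0∞ :=
  ∫⁻ y, g y * ENNReal.ofReal (‖x - y‖ ^ (α - (n : ℝ)))

theorem stmt6 (n : ℕ) (hn : 0 < n) (α : ℝ) (hα : 0 ≤ α) (hαn : α < n)
    (X : BFL n) (Y : NFS n)
    (hbdd : ∃ C : ℝ≥0∞, C < ⊤ ∧ ∀ f : Euc n → ℝ, Measurable f →
      Y.N (fracMax n α fun x => ENNReal.ofReal |f x|) ≤ C * X.N f) :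
    ∃ C : ℝ≥0∞, C < ⊤ ∧ ∀ (c : Euc n) (r : ℝ), 0 < r →
      Y.N (chiE n c r) * kdual X (chiE n c r) ≤ C * (volume (ball c r)) ^ (1 - α / (n : ℝ)) := by
  obtain ⟨C, hC, hb⟩ := hbdd
  refine ⟨C, hC, fun c r hr => ?_⟩
  set v := volume (ball c r) with hv
  have hv0 : v ≠ 0 := (Metric.measure_ball_pos volume c hr).ne'
  have hvt : v ≠ ⊤ := measure_ball_lt_top.ne
  rw [kdual, ENNReal.mul_iSup]
  refine iSup_le fun f => ?_
  rw [ENNReal.mul_iSup]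
  refine iSup_le fun hf => ?_
  obtain ⟨hfm, hfX⟩ := hf
  have hint : (∫⁻ x, ENNReal.ofReal |f x| * chiE n c r x)
      = ∫⁻ x in ball c r, ENNReal.ofReal |f x| := by
    rw [← lintegral_indicator measurableSet_ball]
    congr 1; ext x
    by_cases hx : x ∈ ball c r <;> simp [chiE, indicator, hx]
  rw [hint]
  set I := ∫⁻ x in ball c r, ENNReal.ofReal |f x| with hI
  have hpt : ∀ x, (v ^ (α / (n:ℝ) - 1) * I) * chiE n c r x
      ≤ fracMax n α (fun y => ENNReal.ofReal |f y|) x := by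
    intro x
    by_cases hx : x ∈ ball c r
    · simp only [chiE, indicator_of_mem hx, mul_one]
      exact le_iSup_of_le c (le_iSup_of_le r (le_iSup_of_le ⟨hr, hx⟩ le_rfl))
    · simp [chiE, indicator_of_notMem hx]
  have hYle : (v ^ (α / (n:ℝ) - 1) * I) * Y.N (chiE n c r) ≤ C := by
    calc (v ^ (α / (n:ℝ) - 1) * I) * Y.N (chiE n c r)
        = Y.N (fun x => (v ^ (α / (n:ℝ) - 1) * I) * chiE n c r x) := (Y.smul _ _).symm
      _ ≤ Y.N (fracMax n α fun y => ENNReal.ofReal |f y|) := Y.mono _ _ hpt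
      _ ≤ C * X.N f := hb f hfm
      _ ≤ C * 1 := mul_le_mul_right hfX C
      _ = C := mul_one C
  have hcancel : v ^ ((1:ℝ) - α / (n:ℝ)) * v ^ (α / (n:ℝ) - 1) = 1 := by
    rw [← ENNReal.rpow_add _ _ hv0 hvt]
    norm_num
  calc Y.N (chiE n c r) * I
      = v ^ ((1:ℝ) - α / (n:ℝ)) * ((v ^ (α / (n:ℝ) - 1) * I) * Y.N (chiE n c r)) := by
        rw [mul_assoc (v ^ (α / (n:ℝ) - 1)) I, ← mul_assoc, hcancel, one_mul, mul_comm]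
    _ ≤ v ^ ((1:ℝ) - α / (n:ℝ)) * C := mul_le_mul_right hYle _
    _ = C * v ^ (1 - α / (n:ℝ)) := mul_comm _ _
end
end

section
/- Let X be a Banach lattice of measurable functions on ℝ^n and Y a normed function space, 0 < α < n. If the fractional integral I_α (defined by I_α f(x) = ∫ f(y)|x−y|^{α−n} dy) maps X boundedly into Y, then sup over all balls B of ‖χ_B‖_Y ‖(Mχ_B)^{1−α/n}‖_{X'} / |B|^{1−α/n} < ∞, where M is the Hardy–Littlewood maximal function. -/
open MeasureTheory Metric Set ENNReal

noncomputable section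

theorem stmt7 (n : ℕ) (hn : 0 < n) (α : ℝ) (hα : 0 < α) (hαn : α < n)
    (X : BFL n) (Y : NFS n)
    (hbdd : ∃ C : ℝ≥0∞, C < ⊤ ∧ ∀ f : Euc n → ℝ, Measurable f →
      Y.N (fracInt n α fun x => ENNReal.ofReal |f x|) ≤ C * X.N f) :
    ∃ C : ℝ≥0∞, C < ⊤ ∧ ∀ (c : Euc n) (r : ℝ), 0 < r →
      Y.N (chiE n c r) * kdual X (fun y => hlMax n (chiE n c r) y ^ (1 - α / (n : ℝ))) ≤
        C * (volume (ball c r)) ^ (1 - α / (n : ℝ)) := by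
  obtain ⟨C, hC, hTC⟩ := hbdd
  have hn' : (0:ℝ) < n := by exact_mod_cast hn
  set s : ℝ := 1 - α / n with hsdef
  have hs0 : 0 < s := by
    have : α / n < 1 := (div_lt_one hn').2 hαn
    simp only [hsdef]; linarith
  have hnα : (0:ℝ) < (n:ℝ) - α := by linarith
  have hns : (n:ℝ) * s = (n:ℝ) - α := by
    rw [hsdef]; field_simp
  haveI : Inhabited (Fin n) := ⟨⟨0, hn⟩⟩
  haveI : Nontrivial (Euc n) := inferInstance
  set ω := volume (ball (0:Euc n) 1) with hωdef
  have hω0 : ω ≠ 0 := (measure_ball_pos _ _ one_pos).ne'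
  have hωt : ω ≠ ⊤ := measure_ball_lt_top.ne
  have hωs1 : ω ^ (-s) * ω ^ s = 1 := by
    rw [← ENNReal.rpow_add _ _ hω0 hωt]; simp
  have hωst : ω ^ (-s) ≠ ⊤ := by
    intro h
    have := hωs1
    rw [h] at this
    have hωs0 : ω ^ s ≠ 0 := (ENNReal.rpow_pos (lt_of_le_of_ne zero_le (Ne.symm hω0)) hωt).ne'
    rw [ENNReal.top_mul hωs0] at this
    exact (by simp : (⊤:ℝ≥0∞) ≠ 1) this
  refine ⟨ENNReal.ofReal (4 ^ ((n:ℝ) - α)) * C * ω ^ (-s), ?_, ?_⟩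
  · exact ENNReal.mul_lt_top
      (ENNReal.mul_lt_top ENNReal.ofReal_lt_top hC) (lt_top_iff_ne_top.2 hωst)
  intro c r hr
  have hvol : ∀ (c' : Euc n) {ρ : ℝ}, 0 < ρ →
      volume (ball c' ρ) = ENNReal.ofReal (ρ ^ n) * ω := by
    intro c' ρ hρ
    rw [hωdef, Measure.addHaar_ball_of_pos volume c' hρ, finrank_euclideanSpace_fin]
  -- Step 1: pointwise bound on the maximal function of the ball indicator
  have hM : ∀ y : Euc n, hlMax n (chiE n c r) y ≤
      ENNReal.ofReal ((4 * r / (r + dist y c)) ^ n) := by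
    intro y
    have hRy : 0 < r + dist y c := by positivity
    refine iSup_le fun c' => iSup_le fun ρ => iSup_le fun hyp => ?_
    obtain ⟨hρ, hy⟩ := hyp
    have hb'0 : volume (ball c' ρ) ≠ 0 := (measure_ball_pos _ _ hρ).ne'
    have hb't : volume (ball c' ρ) ≠ ⊤ := measure_ball_lt_top.ne
    have hint : ∫⁻ x in ball c' ρ, chiE n c r x = volume (ball c r ∩ ball c' ρ) := by
      rw [chiE, lintegral_indicator measurableSet_ball, Measure.restrict_restrict
        measurableSet_ball, setLIntegral_one]
    rw [hint]
    rcases (ball c r ∩ ball c' ρ).eq_empty_or_nonempty with he | ⟨z, hz1, hz2⟩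
    · simp [he]
    · have hzc : dist z c < r := mem_ball.1 hz1
      have hzc' : dist z c' < ρ := mem_ball.1 hz2
      have hyc' : dist y c' < ρ := mem_ball.1 hy
      have hRle : r + dist y c ≤ 2 * r + 2 * ρ := by
        have h1 : dist y c ≤ dist y c' + dist c' z + dist z c := dist_triangle4 y c' z c
        have h2 : dist c' z = dist z c' := dist_comm c' z
        linarith
      rcases le_total ρ r with hcase | hcase
      · have h4 : r + dist y c ≤ 4 * r := by linarith
        have h1 : (volume (ball c' ρ))⁻¹ * volume (ball c r ∩ ball c' ρ) ≤ 1 := by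
          calc (volume (ball c' ρ))⁻¹ * volume (ball c r ∩ ball c' ρ)
              ≤ (volume (ball c' ρ))⁻¹ * volume (ball c' ρ) :=
                mul_le_mul_right (measure_mono inter_subset_right) _
            _ = 1 := ENNReal.inv_mul_cancel hb'0 hb't
        refine h1.trans ?_
        rw [show (1:ℝ≥0∞) = ENNReal.ofReal 1 by simp]
        refine ENNReal.ofReal_le_ofReal (one_le_pow₀ ?_)
        rw [le_div_iff₀ hRy]
        linarith
      · have h4 : r + dist y c ≤ 4 * ρ := by linarith
        calc (volume (ball c' ρ))⁻¹ * volume (ball c r ∩ ball c' ρ)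
            ≤ (volume (ball c' ρ))⁻¹ * volume (ball c r) :=
              mul_le_mul_right (measure_mono inter_subset_left) _
          _ = ENNReal.ofReal ((r / ρ) ^ n) := by
              rw [hvol c' hρ, hvol c hr, ENNReal.mul_inv (Or.inl
                  (ENNReal.ofReal_pos.2 (by positivity)).ne') (Or.inl ENNReal.ofReal_ne_top)]
              calc (ENNReal.ofReal (ρ ^ n))⁻¹ * ω⁻¹ * (ENNReal.ofReal (r ^ n) * ω)
                  = (ENNReal.ofReal (ρ ^ n))⁻¹ * ENNReal.ofReal (r ^ n) * (ω⁻¹ * ω) := by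
                    ring
                _ = (ENNReal.ofReal (ρ ^ n))⁻¹ * ENNReal.ofReal (r ^ n) := by
                    rw [ENNReal.inv_mul_cancel hω0 hωt, mul_one]
                _ = ENNReal.ofReal ((r / ρ) ^ n) := by
                    rw [div_pow, ENNReal.ofReal_div_of_pos (by positivity), div_eq_mul_inv,
                      mul_comm]
          _ ≤ ENNReal.ofReal ((4 * r / (r + dist y c)) ^ n) := by
              refine ENNReal.ofReal_le_ofReal (pow_le_pow_left₀ (by positivity) ?_ n)
              rw [div_le_div_iff₀ (by positivity) hRy]
              nlinarith
  -- Step 2: the power bound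
  have hMs : ∀ y : Euc n, hlMax n (chiE n c r) y ^ s ≤
      ENNReal.ofReal ((4 * r) ^ ((n:ℝ) - α) * (r + dist y c) ^ (α - (n:ℝ))) := by
    intro y
    have hRy : 0 < r + dist y c := by positivity
    have h1 : hlMax n (chiE n c r) y ^ s ≤
        (ENNReal.ofReal ((4 * r / (r + dist y c)) ^ n)) ^ s :=
      ENNReal.rpow_le_rpow (hM y) hs0.le
    refine h1.trans_eq ?_
    rw [ENNReal.ofReal_rpow_of_nonneg (by positivity) hs0.le]
    congr 1
    rw [← Real.rpow_natCast (4 * r / (r + dist y c)) n, ← Real.rpow_mul (by positivity), hns,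
      Real.div_rpow (by positivity) hRy.le, div_eq_mul_inv, ← Real.rpow_neg hRy.le, neg_sub]
  -- Step 3: the key estimate for each admissible f
  have key : ∀ f : Euc n → ℝ, Measurable f → X.N f ≤ 1 →
      Y.N (chiE n c r) * ∫⁻ y, ENNReal.ofReal |f y| * hlMax n (chiE n c r) y ^ s ≤
        ENNReal.ofReal ((4 * r) ^ ((n:ℝ) - α)) * C := by
    intro f hf hf1
    set b := ENNReal.ofReal ((4 * r) ^ ((n:ℝ) - α)) with hbdef
    have hb0 : b ≠ 0 := by
      rw [hbdef]
      simp only [ne_eq, ENNReal.ofReal_eq_zero, not_le]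
      positivity
    have hbt : b ≠ ⊤ := ENNReal.ofReal_ne_top
    set J := ∫⁻ y, ENNReal.ofReal |f y| * hlMax n (chiE n c r) y ^ s with hJ
    set I := fracInt n α (fun y => ENNReal.ofReal |f y|) with hI
    have hJle : ∀ x ∈ ball c r, J ≤ b * I x := by
      intro x hx
      rw [hI, fracInt, ← lintegral_const_mul' _ _ hbt, hJ]
      apply lintegral_mono_ae
      filter_upwards [compl_mem_ae_iff.mpr (measure_singleton x)] with y hy
      have hyx : y ≠ x := hy
      have hRy : 0 < r + dist y c := by positivity
      have hdist : ‖x - y‖ ≤ r + dist y c := by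
        rw [← dist_eq_norm]
        calc dist x y ≤ dist x c + dist c y := dist_triangle x c y
          _ ≤ r + dist y c := by
              have h1 : dist x c < r := mem_ball.1 hx
              have h2 : dist c y = dist y c := dist_comm c y
              linarith
      have hpos : 0 < ‖x - y‖ := by
        simpa only [norm_pos_iff, sub_ne_zero] using (Ne.symm hyx)
      have hker : (r + dist y c) ^ (α - (n:ℝ)) ≤ ‖x - y‖ ^ (α - (n:ℝ)) :=
        Real.rpow_le_rpow_of_nonpos hpos hdist (by linarith)
      calc ENNReal.ofReal |f y| * hlMax n (chiE n c r) y ^ s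
          ≤ ENNReal.ofReal |f y| *
              ENNReal.ofReal ((4 * r) ^ ((n:ℝ) - α) * (r + dist y c) ^ (α - (n:ℝ))) :=
            mul_le_mul_right (hMs y) _
        _ = b * (ENNReal.ofReal |f y| * ENNReal.ofReal ((r + dist y c) ^ (α - (n:ℝ)))) := by
            rw [ENNReal.ofReal_mul (by positivity), hbdef]; ring
        _ ≤ b * (ENNReal.ofReal |f y| * ENNReal.ofReal (‖x - y‖ ^ (α - (n:ℝ)))) := by
            exact mul_le_mul_right (mul_le_mul_right (ENNReal.ofReal_le_ofReal hker) _) _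
    have hpt : ∀ x, (b⁻¹ * J) * chiE n c r x ≤ I x := by
      intro x
      by_cases hx : x ∈ ball c r
      · rw [chiE, indicator_of_mem hx, mul_one]
        calc b⁻¹ * J ≤ b⁻¹ * (b * I x) := mul_le_mul_right (hJle x hx) _
          _ = I x := by rw [← mul_assoc, ENNReal.inv_mul_cancel hb0 hbt, one_mul]
      · rw [chiE, indicator_of_notMem hx, mul_zero]
        exact zero_le
    have hYle : b⁻¹ * J * Y.N (chiE n c r) ≤ C := by
      have h1 : Y.N (fun x => (b⁻¹ * J) * chiE n c r x) ≤ Y.N I := Y.mono _ _ hpt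
      rw [Y.smul] at h1
      calc b⁻¹ * J * Y.N (chiE n c r) ≤ Y.N I := h1
        _ ≤ C * X.N f := hTC f hf
        _ ≤ C * 1 := mul_le_mul_right hf1 _
        _ = C := mul_one C
    calc Y.N (chiE n c r) * J = b * (b⁻¹ * J * Y.N (chiE n c r)) := by
          have h2 : b * (b⁻¹ * J * Y.N (chiE n c r)) =
              (b * b⁻¹) * (Y.N (chiE n c r) * J) := by ring
          rw [h2, ENNReal.mul_inv_cancel hb0 hbt, one_mul]
      _ ≤ b * C := mul_le_mul_right hYle _
  -- Step 4: take the supremum and conclude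
  have hsup : Y.N (chiE n c r) *
      kdual X (fun y => hlMax n (chiE n c r) y ^ s) ≤
        ENNReal.ofReal ((4 * r) ^ ((n:ℝ) - α)) * C := by
    rw [kdual, ENNReal.mul_iSup]
    refine iSup_le fun f => ?_
    rw [ENNReal.mul_iSup]
    exact iSup_le fun hfp => key f hfp.1 hfp.2
  refine hsup.trans ?_
  have hvs : (volume (ball c r)) ^ s = ENNReal.ofReal (r ^ ((n:ℝ) - α)) * ω ^ s := by
    rw [hvol c hr, ENNReal.mul_rpow_of_ne_top ENNReal.ofReal_ne_top hωt,
      ENNReal.ofReal_rpow_of_nonneg (by positivity) hs0.le]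
    congr 2
    rw [← Real.rpow_natCast r n, ← Real.rpow_mul hr.le, hns]
  have h4 : ENNReal.ofReal ((4 * r) ^ ((n:ℝ) - α)) =
      ENNReal.ofReal (4 ^ ((n:ℝ) - α)) * ENNReal.ofReal (r ^ ((n:ℝ) - α)) := by
    rw [← ENNReal.ofReal_mul (by positivity), ← Real.mul_rpow (by norm_num) hr.le]
  rw [hvs, h4]
  refine le_of_eq ?_
  have heq : ENNReal.ofReal (4 ^ ((n:ℝ) - α)) * ENNReal.ofReal (r ^ ((n:ℝ) - α)) * C =
      ENNReal.ofReal (4 ^ ((n:ℝ) - α)) * C * ω ^ (-s) *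
        (ENNReal.ofReal (r ^ ((n:ℝ) - α)) * ω ^ s) := by
    have h5 : ENNReal.ofReal (4 ^ ((n:ℝ) - α)) * C * ω ^ (-s) *
        (ENNReal.ofReal (r ^ ((n:ℝ) - α)) * ω ^ s) =
        ENNReal.ofReal (4 ^ ((n:ℝ) - α)) * ENNReal.ofReal (r ^ ((n:ℝ) - α)) * C *
          (ω ^ (-s) * ω ^ s) := by ring
    rw [h5, hωs1, mul_one]
  exact heq
end
end
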